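/- arXiv:1204.4967 — 2 statements merged into one kernel-verified Lean document; each statement's English description precedes it below -/
import Mathlib

section
/- Let n be a positive integer and let c ∈ ℤ with c ∉ {0, 1, −1}. Set d = 2n+1 and consider the two models over ℤ: [F,G] with F = X^{2n+1} − c^{n+1}Y^{2n+1}, G = X^nY^{n+1}, and [F',G'] with F' = c^nX^{2n+1} − Y^{2n+1}, G' = X^nY^{n+1}. Then both models are ℤ-minimal models of the same class [φ] ∈ M_d(ℚ) — indeed [F',G'] = [F,G]^{(λ,A)} for (λ,A) = (c^{−n−1}, diag(c,1)) and Res_d(F,G) = Res_d(F',G') — but [F,G] and [F',G'] do not lie in the same orbit under the action of ℤ^× × GL₂(ℤ). -/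
noncomputable section

/-- Determinant of the Sylvester matrix of two polynomials, given by coefficient
sequences `p` (regarded as having degree `m`) and `q` (regarded as having degree `n`). -/
def sylRes {K : Type*} [CommRing K] (m n : ℕ) (p q : ℕ → K) : K :=
  Matrix.det (Matrix.of fun i j : Fin (n + m) =>
    if (i : ℕ) < n then
      (if (i : ℕ) ≤ (j : ℕ) ∧ (j : ℕ) ≤ (i : ℕ) + m then p (m - ((j : ℕ) - (i : ℕ))) else 0)
    else
      (if (i : ℕ) - n ≤ (j : ℕ) ∧ (j : ℕ) ≤ ((i : ℕ) - n) + n then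
        q (n - ((j : ℕ) - ((i : ℕ) - n))) else 0))

/-- The binary form of degree `d` with coefficient sequence `f`
(`f i` is the coefficient of `X^i Y^(d-i)`). -/
def toForm {K : Type*} [CommRing K] (d : ℕ) (f : ℕ → K) : MvPolynomial (Fin 2) K :=
  ∑ i ∈ Finset.range (d + 1),
    MvPolynomial.C (f i) * MvPolynomial.X 0 ^ i * MvPolynomial.X 1 ^ (d - i)

/-- Substitution `X ↦ A₀₀ X + A₀₁ Y`, `Y ↦ A₁₀ X + A₁₁ Y`. -/
def substMat {K : Type*} [CommRing K] (A : Matrix (Fin 2) (Fin 2) K)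
    (P : MvPolynomial (Fin 2) K) : MvPolynomial (Fin 2) K :=
  MvPolynomial.eval₂ MvPolynomial.C
    (fun k => MvPolynomial.C (A k 0) * MvPolynomial.X 0 + MvPolynomial.C (A k 1) * MvPolynomial.X 1) P

/-- Coefficient sequence of a binary form of degree `d`. -/
def coeffVec {K : Type*} [CommRing K] (d : ℕ) (P : MvPolynomial (Fin 2) K) : ℕ → K :=
  fun i => MvPolynomial.coeff (Finsupp.single (0 : Fin 2) i + Finsupp.single (1 : Fin 2) (d - i)) P

/-- Coefficients of `F_A = δ·(F∘A) − β·(G∘A)` for `A = [[α,β],[γ,δ]]`. -/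
def FA {K : Type*} [CommRing K] (d : ℕ) (f g : ℕ → K) (A : Matrix (Fin 2) (Fin 2) K) : ℕ → K :=
  coeffVec d (MvPolynomial.C (A 1 1) * substMat A (toForm d f) -
    MvPolynomial.C (A 0 1) * substMat A (toForm d g))

/-- Coefficients of `G_A = −γ·(F∘A) + α·(G∘A)` for `A = [[α,β],[γ,δ]]`. -/
def GA {K : Type*} [CommRing K] (d : ℕ) (f g : ℕ → K) (A : Matrix (Fin 2) (Fin 2) K) : ℕ → K :=
  coeffVec d (-(MvPolynomial.C (A 1 0)) * substMat A (toForm d f) +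
    MvPolynomial.C (A 0 0) * substMat A (toForm d g))

/-- The ideal `Res_R([φ])`: generated by the resultants of all models over `R`
of the form `[F,G]^{(λ,A)}` with `(λ,A) ∈ K^× × GL₂(K)`. -/
def ResIdeal (R : Type*) {K : Type*} [CommRing R] [Field K] [Algebra R K]
    (d : ℕ) (f g : ℕ → K) : Ideal R :=
  Ideal.span { r : R | ∃ (l : K) (A : Matrix (Fin 2) (Fin 2) K), l ≠ 0 ∧ A.det ≠ 0 ∧
    (∀ i, ∃ a : R, algebraMap R K a = l * FA d f g A i) ∧
    (∀ i, ∃ b : R, algebraMap R K b = l * GA d f g A i) ∧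
    algebraMap R K r = sylRes d d (fun i => l * FA d f g A i) (fun i => l * GA d f g A i) }

/-- The ideal `Res_R([φ]₁)`: as `ResIdeal` but with `A` restricted to affine
(upper-triangular) transformations. -/
def AffResIdeal (R : Type*) {K : Type*} [CommRing R] [Field K] [Algebra R K]
    (d : ℕ) (f g : ℕ → K) : Ideal R :=
  Ideal.span { r : R | ∃ (l : K) (A : Matrix (Fin 2) (Fin 2) K), l ≠ 0 ∧ A.det ≠ 0 ∧ A 1 0 = 0 ∧
    (∀ i, ∃ a : R, algebraMap R K a = l * FA d f g A i) ∧
    (∀ i, ∃ b : R, algebraMap R K b = l * GA d f g A i) ∧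
    algebraMap R K r = sylRes d d (fun i => l * FA d f g A i) (fun i => l * GA d f g A i) }


open MvPolynomial Finset

namespace S16

variable {K : Type*} [CommRing K]

lemma term_eq (a : K) (i j : ℕ) :
    C a * X (0:Fin 2) ^ i * X 1 ^ j
      = monomial (Finsupp.single (0:Fin 2) i + Finsupp.single (1:Fin 2) j) a := by
  rw [X_pow_eq_monomial, X_pow_eq_monomial, C_apply, monomial_mul, monomial_mul]
  simp

lemma single_add_single_eq {s t s' t' : ℕ} :
    (Finsupp.single (0:Fin 2) s + Finsupp.single (1:Fin 2) t
      = Finsupp.single (0:Fin 2) s' + Finsupp.single (1:Fin 2) t') ↔ (s = s' ∧ t = t') := by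
  constructor
  · intro h
    refine ⟨?_, ?_⟩
    · have := DFunLike.congr_fun h (0 : Fin 2)
      simpa using this
    · have := DFunLike.congr_fun h (1 : Fin 2)
      simpa using this
  · rintro ⟨rfl, rfl⟩; rfl

lemma coeff_toForm (d : ℕ) (h : ℕ → K) (s t : ℕ) :
    MvPolynomial.coeff (Finsupp.single (0:Fin 2) s + Finsupp.single (1:Fin 2) t) (toForm d h)
      = if s ≤ d ∧ t = d - s then h s else 0 := by
  unfold toForm
  rw [MvPolynomial.coeff_sum]
  have hterm : ∀ i ∈ Finset.range (d+1),
      MvPolynomial.coeff (Finsupp.single (0:Fin 2) s + Finsupp.single (1:Fin 2) t)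
        (C (h i) * X 0 ^ i * X 1 ^ (d - i))
        = if i = s ∧ t = d - s then h i else 0 := by
    intro i hi
    have hcond : ((Finsupp.single (0:Fin 2) i + Finsupp.single (1:Fin 2) (d-i))
        = (Finsupp.single (0:Fin 2) s + Finsupp.single (1:Fin 2) t)) ↔ (i = s ∧ t = d - s) := by
      rw [single_add_single_eq]
      constructor
      · rintro ⟨rfl, h⟩; exact ⟨rfl, h.symm⟩
      · rintro ⟨rfl, h⟩; exact ⟨rfl, h.symm⟩
    rw [term_eq, coeff_monomial, if_congr hcond rfl rfl]
  rw [Finset.sum_congr rfl hterm]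
  by_cases hs : s ≤ d
  · rw [Finset.sum_eq_single s]
    · simp [hs]
    · intro b hb hbs; simp [hbs]
    · intro hsmem; exact absurd (Finset.mem_range.2 (by omega)) hsmem
  · rw [Finset.sum_eq_zero, if_neg (by tauto)]
    intro i hi
    simp only [Finset.mem_range] at hi
    rw [if_neg]; rintro ⟨rfl, -⟩; omega

lemma coeffVec_toForm (d : ℕ) (h : ℕ → K) (i : ℕ) :
    coeffVec d (toForm d h) i = if i ≤ d then h i else 0 := by
  unfold coeffVec
  rw [coeff_toForm]
  by_cases hi : i ≤ d <;> simp [hi]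

lemma toForm_isHomogeneous (d : ℕ) (h : ℕ → K) : (toForm d h).IsHomogeneous d := by
  apply MvPolynomial.IsHomogeneous.sum
  intro i hi
  simp only [Finset.mem_range] at hi
  have h1 : (C (h i) * X (0:Fin 2) ^ i * X 1 ^ (d-i)).IsHomogeneous (0 + 1*i + 1*(d-i)) :=
    ((isHomogeneous_C _ _).mul ((isHomogeneous_X _ _).pow i)).mul ((isHomogeneous_X _ _).pow _)
  convert h1 using 1
  omega

lemma fin2_decomp (μ : Fin 2 →₀ ℕ) :
    μ = Finsupp.single (0:Fin 2) (μ 0) + Finsupp.single (1:Fin 2) (μ 1) := by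
  ext j
  fin_cases j <;> simp

lemma fin2_degree (μ : Fin 2 →₀ ℕ) : μ.degree = μ 0 + μ 1 := by
  rw [Finsupp.degree_apply, Finset.sum_subset (Finset.subset_univ _)
    (fun i _ hi => Finsupp.notMem_support_iff.mp hi), Fin.sum_univ_two]

lemma coeff_eq_coeffVec {μ : Fin 2 →₀ ℕ} {d : ℕ} (hμ : μ 0 + μ 1 = d)
    (Q : MvPolynomial (Fin 2) K) : MvPolynomial.coeff μ Q = coeffVec d Q (μ 0) := by
  unfold coeffVec
  have h1 : d - μ 0 = μ 1 := by omega
  rw [h1]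
  conv_lhs => rw [fin2_decomp μ]

lemma toForm_coeffVec {P : MvPolynomial (Fin 2) K} {d : ℕ} (hP : P.IsHomogeneous d) :
    toForm d (coeffVec d P) = P := by
  apply MvPolynomial.ext
  intro μ
  by_cases hμ : μ 0 + μ 1 = d
  · rw [coeff_eq_coeffVec hμ, coeff_eq_coeffVec hμ P, coeffVec_toForm, if_pos (by omega)]
  · rw [hP.coeff_eq_zero (by rw [fin2_degree]; exact hμ),
      (toForm_isHomogeneous d _).coeff_eq_zero (by rw [fin2_degree]; exact hμ)]

-- ==== section join ====

variable {K : Type*} [CommRing K]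

lemma substMat_C (A : Matrix (Fin 2) (Fin 2) K) (a : K) : substMat A (C a) = C a :=
  eval₂_C _ _ _

lemma substMat_add (A : Matrix (Fin 2) (Fin 2) K) (P Q : MvPolynomial (Fin 2) K) :
    substMat A (P + Q) = substMat A P + substMat A Q := eval₂_add _ _

lemma substMat_mul (A : Matrix (Fin 2) (Fin 2) K) (P Q : MvPolynomial (Fin 2) K) :
    substMat A (P * Q) = substMat A P * substMat A Q := eval₂_mul _ _

lemma substMat_pow (A : Matrix (Fin 2) (Fin 2) K) (P : MvPolynomial (Fin 2) K) (m : ℕ) :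
    substMat A (P ^ m) = substMat A P ^ m := eval₂_pow _ _

lemma substMat_X (A : Matrix (Fin 2) (Fin 2) K) (s : Fin 2) :
    substMat A (X s) = C (A s 0) * X 0 + C (A s 1) * X 1 := eval₂_X _ _ _

lemma substMat_sum (A : Matrix (Fin 2) (Fin 2) K) {ι : Type*} (s : Finset ι)
    (f : ι → MvPolynomial (Fin 2) K) :
    substMat A (∑ i ∈ s, f i) = ∑ i ∈ s, substMat A (f i) := by
  classical
  induction s using Finset.induction_on with
  | empty => simp [substMat]
  | insert x s hx ih =>
      rw [Finset.sum_insert hx, Finset.sum_insert hx, substMat_add, ih]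

lemma substMat_one (P : MvPolynomial (Fin 2) K) : substMat 1 P = P := by
  have hX : (fun k : Fin 2 => C ((1 : Matrix (Fin 2) (Fin 2) K) k 0) * X 0 +
      C ((1 : Matrix (Fin 2) (Fin 2) K) k 1) * X 1) = X := by
    funext k
    fin_cases k <;> simp [Matrix.one_apply]
  unfold substMat
  rw [hX]
  exact eval₂_eta P

lemma substMat_substMat (A B : Matrix (Fin 2) (Fin 2) K) (P : MvPolynomial (Fin 2) K) :
    substMat B (substMat A P) = substMat (A * B) P := by
  induction P using MvPolynomial.induction_on with
  | C a => rw [substMat_C, substMat_C, substMat_C]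
  | add p q hp hq => rw [substMat_add, substMat_add, substMat_add, hp, hq]
  | mul_X p s hp =>
      rw [substMat_mul, substMat_mul, substMat_mul, hp, substMat_X, substMat_X]
      congr 1
      rw [substMat_add, substMat_mul, substMat_mul, substMat_C, substMat_C, substMat_X, substMat_X]
      simp only [Matrix.mul_apply, Fin.sum_univ_two, map_add, map_mul]
      ring

lemma substMat_toForm (A : Matrix (Fin 2) (Fin 2) K) (dd : ℕ) (h : ℕ → K) :
    substMat A (toForm dd h) = ∑ i ∈ Finset.range (dd+1), C (h i)
      * (C (A 0 0) * X (0:Fin 2) + C (A 0 1) * X 1) ^ i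
      * (C (A 1 0) * X (0:Fin 2) + C (A 1 1) * X 1) ^ (dd - i) := by
  rw [toForm, substMat_sum]
  refine Finset.sum_congr rfl fun i hi => ?_
  rw [substMat_mul, substMat_mul, substMat_C, substMat_pow, substMat_pow, substMat_X, substMat_X]

lemma isHomog_L (a b : K) : (C a * X (0:Fin 2) + C b * X 1).IsHomogeneous 1 := by
  have h1 : (C a * X (0:Fin 2)).IsHomogeneous (0 + 1) :=
    (isHomogeneous_C _ a).mul (isHomogeneous_X _ 0)
  have h2 : (C b * X (1:Fin 2)).IsHomogeneous (0 + 1) :=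
    (isHomogeneous_C _ b).mul (isHomogeneous_X _ 1)
  simpa using h1.add h2

lemma substMat_toForm_isHomogeneous (A : Matrix (Fin 2) (Fin 2) K) (dd : ℕ) (h : ℕ → K) :
    (substMat A (toForm dd h)).IsHomogeneous dd := by
  rw [substMat_toForm]
  apply MvPolynomial.IsHomogeneous.sum
  intro i hi
  simp only [Finset.mem_range] at hi
  have h1 := ((isHomogeneous_C (Fin 2) (h i)).mul ((isHomog_L (A 0 0) (A 0 1)).pow i)).mul
    ((isHomog_L (A 1 0) (A 1 1)).pow (dd - i))
  convert h1 using 1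
  omega

lemma substMat_isHomogeneous {P : MvPolynomial (Fin 2) K} {dd : ℕ}
    (hP : P.IsHomogeneous dd) (A : Matrix (Fin 2) (Fin 2) K) :
    (substMat A P).IsHomogeneous dd := by
  rw [← toForm_coeffVec hP]
  exact substMat_toForm_isHomogeneous A dd _

lemma mono_isHomogeneous (j b : ℕ) :
    ((X (0:Fin 2) ^ j * X 1 ^ b : MvPolynomial (Fin 2) K)).IsHomogeneous (j + b) := by
  have := ((isHomogeneous_X K (0:Fin 2)).pow j).mul ((isHomogeneous_X K (1:Fin 2)).pow b)
  simpa using this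

def sigmaMat (k : ℕ) (A : Matrix (Fin 2) (Fin 2) K) : Matrix (Fin (k+1)) (Fin (k+1)) K :=
  Matrix.of fun t j => coeffVec k (substMat A (X (0:Fin 2) ^ (j:ℕ) * X 1 ^ (k - (j:ℕ)))) t

lemma coeffVec_sum {ι : Type*} (d : ℕ) (s : Finset ι) (f : ι → MvPolynomial (Fin 2) K) (t : ℕ) :
    coeffVec d (∑ i ∈ s, f i) t = ∑ i ∈ s, coeffVec d (f i) t := by
  unfold coeffVec
  rw [MvPolynomial.coeff_sum]

lemma coeffVec_C_mul (d : ℕ) (a : K) (P : MvPolynomial (Fin 2) K) (t : ℕ) :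
    coeffVec d (C a * P) t = a * coeffVec d P t := by
  unfold coeffVec
  rw [coeff_C_mul]

lemma toForm_eq_sum_mono (k : ℕ) (h : ℕ → K) :
    toForm k h = ∑ j ∈ Finset.range (k+1), C (h j) * (X (0:Fin 2) ^ j * X 1 ^ (k - j)) := by
  rw [toForm]
  exact Finset.sum_congr rfl fun i _ => by rw [mul_assoc]

lemma coeffVec_substMat_toForm (k : ℕ) (A : Matrix (Fin 2) (Fin 2) K) (h : ℕ → K) (t : ℕ) :
    coeffVec k (substMat A (toForm k h)) t
      = ∑ j ∈ Finset.range (k+1),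
          coeffVec k (substMat A (X (0:Fin 2) ^ j * X 1 ^ (k - j))) t * h j := by
  rw [toForm_eq_sum_mono, substMat_sum, coeffVec_sum]
  refine Finset.sum_congr rfl fun j _ => ?_
  rw [substMat_mul, substMat_C, coeffVec_C_mul, mul_comm]

lemma mono_eq_toForm (k j : ℕ) (hj : j ≤ k) :
    (X (0:Fin 2) ^ j * X 1 ^ (k - j) : MvPolynomial (Fin 2) K)
      = toForm k (fun m => if m = j then 1 else 0) := by
  have hh : ((X (0:Fin 2) ^ j * X 1 ^ (k - j) : MvPolynomial (Fin 2) K)).IsHomogeneous k := by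
    have := mono_isHomogeneous (K := K) j (k - j)
    convert this using 1
    omega
  rw [← toForm_coeffVec hh]
  congr 1
  funext m
  have : X (0:Fin 2) ^ j * X 1 ^ (k-j) = C (1:K) * X (0:Fin 2) ^ j * X 1 ^ (k-j) := by
    rw [map_one, one_mul]
  rw [this]
  unfold coeffVec
  rw [term_eq, coeff_monomial]
  by_cases hm : m = j
  · subst hm
    rw [if_pos, if_pos rfl]
    rw [single_add_single_eq]
    exact ⟨rfl, by omega⟩
  · rw [if_neg, if_neg hm]
    rw [single_add_single_eq]
    rintro ⟨h1, -⟩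
    exact hm h1.symm

lemma sigmaMat_mul (k : ℕ) (A B : Matrix (Fin 2) (Fin 2) K) :
    sigmaMat k (A * B) = sigmaMat k B * sigmaMat k A := by
  ext t j
  rw [Matrix.mul_apply]
  show coeffVec k (substMat (A*B) (X (0:Fin 2) ^ (j:ℕ) * X 1 ^ (k-(j:ℕ)))) t = _
  rw [← substMat_substMat]
  have hhom : (substMat A (X (0:Fin 2) ^ (j:ℕ) * X 1 ^ (k-(j:ℕ)))).IsHomogeneous k := by
    apply substMat_isHomogeneous
    have := mono_isHomogeneous (K := K) (j:ℕ) (k - (j:ℕ))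
    convert this using 1
    omega
  rw [← toForm_coeffVec hhom, coeffVec_substMat_toForm]
  rw [← Fin.sum_univ_eq_sum_range (fun m => coeffVec k (substMat B (X (0:Fin 2) ^ m * X 1 ^ (k - m))) t
      * coeffVec k (substMat A (X (0:Fin 2) ^ (j:ℕ) * X 1 ^ (k-(j:ℕ)))) m) (k+1)]
  rfl

lemma sigmaMat_one (k : ℕ) : sigmaMat k (1 : Matrix (Fin 2) (Fin 2) K) = 1 := by
  ext t j
  show coeffVec k (substMat 1 _) t = _
  rw [substMat_one, mono_eq_toForm k (j:ℕ) (by omega), coeffVec_toForm, if_pos (by omega),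
    Matrix.one_apply]
  by_cases h : t = j
  · subst h; simp
  · rw [if_neg (fun hc => h (Fin.ext hc)), if_neg h]

lemma coeff_mul_Xpow (μ : Fin 2 →₀ ℕ) (s : Fin 2) (b : ℕ) (P : MvPolynomial (Fin 2) K) :
    MvPolynomial.coeff (μ + Finsupp.single s b) (P * X s ^ b) = MvPolynomial.coeff μ P := by
  induction b with
  | zero => simp
  | succ b ih =>
      have heq : μ + Finsupp.single s (b+1) = (μ + Finsupp.single s b) + Finsupp.single s 1 := by
        rw [add_assoc, ← Finsupp.single_add]
      rw [heq, pow_succ, ← mul_assoc, MvPolynomial.coeff_mul_X, ih]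

lemma coeff_mul_Xpow_zero {μ : Fin 2 →₀ ℕ} {s : Fin 2} {b : ℕ} (h : μ s < b)
    (P : MvPolynomial (Fin 2) K) :
    MvPolynomial.coeff μ (P * X s ^ b) = 0 := by
  induction b generalizing μ with
  | zero => omega
  | succ b ih =>
      rw [pow_succ, ← mul_assoc, MvPolynomial.coeff_mul_X']
      by_cases hs : s ∈ μ.support
      · rw [if_pos hs]
        apply ih
        rw [Finsupp.tsub_apply, Finsupp.single_apply, if_pos rfl]
        have := Finsupp.mem_support_iff.mp hs
        omega
      · rw [if_neg hs]

lemma eval_toForm_10 (k : ℕ) (h : ℕ → K) :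
    MvPolynomial.eval ![(1:K), 0] (toForm k h) = h k := by
  rw [toForm, map_sum, Finset.sum_eq_single k]
  · simp
  · intro i hi hik
    simp only [Finset.mem_range] at hi
    simp [zero_pow (show k - i ≠ 0 by omega)]
  · intro hk; exact absurd (Finset.mem_range.2 (by omega)) hk

lemma eval_toForm_01 (k : ℕ) (h : ℕ → K) :
    MvPolynomial.eval ![(0:K), 1] (toForm k h) = h 0 := by
  rw [toForm, map_sum, Finset.sum_eq_single 0]
  · simp
  · intro i hi hik
    simp [zero_pow hik]
  · intro hk; exact absurd (Finset.mem_range.2 (by omega)) hk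

lemma coeffVec_top {P : MvPolynomial (Fin 2) K} {k : ℕ} (hP : P.IsHomogeneous k) :
    coeffVec k P k = MvPolynomial.eval ![(1:K), 0] P := by
  conv_rhs => rw [← toForm_coeffVec hP]
  rw [eval_toForm_10]

lemma coeffVec_bot {P : MvPolynomial (Fin 2) K} {k : ℕ} (hP : P.IsHomogeneous k) :
    coeffVec k P 0 = MvPolynomial.eval ![(0:K), 1] P := by
  conv_rhs => rw [← toForm_coeffVec hP]
  rw [eval_toForm_01]

-- ==== section join ====

variable {K : Type*} [CommRing K]

lemma single01_apply0 (a b : ℕ) :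
    (Finsupp.single (0:Fin 2) a + Finsupp.single (1:Fin 2) b) 0 = a := by simp

lemma single01_apply1 (a b : ℕ) :
    (Finsupp.single (0:Fin 2) a + Finsupp.single (1:Fin 2) b) 1 = b := by simp

lemma sigmaMat_triang_entry (k : ℕ) (x z y : K) (t j : Fin (k+1)) :
    sigmaMat k (Matrix.of ![![x, z], ![(0:K), y]]) t j
      = if (j:ℕ) < (t:ℕ) then 0 else
          (if (t:ℕ) = (j:ℕ) then x ^ (j:ℕ) * y ^ (k - (j:ℕ)) else
            sigmaMat k (Matrix.of ![![x, z], ![(0:K), y]]) t j) := by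
  by_cases hcase : (j:ℕ) < (t:ℕ) ∨ (t:ℕ) = (j:ℕ)
  · show coeffVec k (substMat _ (X (0:Fin 2) ^ (j:ℕ) * X 1 ^ (k-(j:ℕ)))) t = _
    rw [substMat_mul, substMat_pow, substMat_pow, substMat_X, substMat_X]
    simp only [Matrix.of_apply, Matrix.cons_val', Matrix.cons_val_zero, Matrix.cons_val_one,
      Matrix.head_cons, Matrix.empty_val', Matrix.cons_val_fin_one, Matrix.head_fin_const]
    rw [map_zero, zero_mul, zero_add, mul_pow, ← C_pow]
    have hrearr : (C x * X (0:Fin 2) + C z * X 1) ^ (j:ℕ) * (C (y ^ (k-(j:ℕ))) * X 1 ^ (k-(j:ℕ)))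
        = ((C x * X (0:Fin 2) + C z * X 1) ^ (j:ℕ) * C (y ^ (k-(j:ℕ)))) * X 1 ^ (k-(j:ℕ)) := by
      ring
    rw [hrearr]
    unfold coeffVec
    rcases hcase with hlt | heq
    · rw [coeff_mul_Xpow_zero (by rw [single01_apply1]; omega), if_pos hlt]
    · have htj : (t:ℕ) = (j:ℕ) := heq
      rw [if_neg (by omega), if_pos heq, htj]
      have hμ : Finsupp.single (0:Fin 2) (j:ℕ) + Finsupp.single (1:Fin 2) (k - (j:ℕ))
          = Finsupp.single (0:Fin 2) (j:ℕ) + Finsupp.single (1:Fin 2) (k - (j:ℕ)) := rfl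
      rw [coeff_mul_Xpow (Finsupp.single (0:Fin 2) (j:ℕ)) 1 (k - (j:ℕ))]
      rw [mul_comm _ (C (y ^ (k-(j:ℕ)))), coeff_C_mul]
      have hpowhom : ((C x * X (0:Fin 2) + C z * X 1) ^ (j:ℕ)).IsHomogeneous (j:ℕ) := by
        have := (isHomog_L x z).pow (j:ℕ)
        simpa using this
      have hcoeff : MvPolynomial.coeff (Finsupp.single (0:Fin 2) (j:ℕ))
          ((C x * X (0:Fin 2) + C z * X 1) ^ (j:ℕ)) = x ^ (j:ℕ) := by
        have h0 : Finsupp.single (0:Fin 2) (j:ℕ)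
            = Finsupp.single (0:Fin 2) (j:ℕ) + Finsupp.single (1:Fin 2) ((j:ℕ) - (j:ℕ)) := by
          simp
        rw [h0]
        have := coeffVec_top hpowhom
        unfold coeffVec at this
        rw [this, map_pow]
        simp
      rw [hcoeff]
      ring
  · push_neg at hcase
    rw [if_neg (by omega), if_neg (by omega)]

lemma sigmaMat_triangular_det (k : ℕ) (x z y : K) :
    (sigmaMat k (Matrix.of ![![x, z], ![(0:K), y]])).det
      = ∏ j : Fin (k+1), (x ^ (j:ℕ) * y ^ (k - (j:ℕ))) := by
  rw [Matrix.det_of_upperTriangular]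
  · refine Finset.prod_congr rfl fun j _ => ?_
    rw [sigmaMat_triang_entry, if_neg (by omega), if_pos rfl]
  · intro i j hij
    rw [sigmaMat_triang_entry, if_pos (show (j:ℕ) < (i:ℕ) from hij)]

lemma prod_sq_eq (k : ℕ) (x y : K) :
    (∏ j : Fin (k+1), (x ^ (j:ℕ) * y ^ (k - (j:ℕ)))) ^ 2 = (x*y) ^ (k*(k+1)) := by
  rw [sq, Fin.prod_univ_eq_prod_range (fun j => x ^ j * y ^ (k - j))]
  nth_rewrite 2 [← Finset.prod_range_reflect (fun j => x ^ j * y ^ (k - j)) (k+1)]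
  rw [← Finset.prod_mul_distrib]
  have hterm : ∀ j ∈ Finset.range (k+1),
      (x ^ j * y ^ (k-j)) * (x ^ (k+1-1-j) * y ^ (k - (k+1-1-j))) = (x*y)^k := by
    intro j hj
    simp only [Finset.mem_range] at hj
    rw [show k+1-1-j = k-j from by omega, show k - (k-j) = j from by omega, mul_pow]
    rw [mul_mul_mul_comm, ← pow_add, ← pow_add, show j + (k-j) = k from by omega,
      show k - j + j = k from by omega]
  rw [Finset.prod_congr rfl hterm, Finset.prod_const, Finset.card_range, ← pow_mul]

def wSwap : Matrix (Fin 2) (Fin 2) K := Matrix.of ![![0,1],![1,0]]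

lemma wSwap_mul_self : (wSwap : Matrix (Fin 2) (Fin 2) K) * wSwap = 1 := by
  ext i j
  fin_cases i <;> fin_cases j <;>
    simp [wSwap, Matrix.mul_apply, Fin.sum_univ_two, Matrix.one_apply]

lemma sigmaMat_swap_det_sq (k : ℕ) : ((sigmaMat k (wSwap : Matrix (Fin 2) (Fin 2) K)).det)^2 = 1 := by
  rw [sq, ← Matrix.det_mul, ← sigmaMat_mul, wSwap_mul_self, sigmaMat_one, Matrix.det_one]

lemma sigmaMat_det_sq {F : Type*} [Field F] (k : ℕ) (A : Matrix (Fin 2) (Fin 2) F)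
    (hA : A.det ≠ 0) :
    ((sigmaMat k A).det)^2 = A.det ^ (k*(k+1)) := by
  have hsq : ∀ x z y : F, ((sigmaMat k (Matrix.of ![![x, z], ![(0:F), y]])).det)^2
      = (x*y)^(k*(k+1)) := fun x z y => by rw [sigmaMat_triangular_det, prod_sq_eq]
  by_cases hγ : A 1 0 = 0
  · have hAeq : A = Matrix.of ![![A 0 0, A 0 1], ![(0:F), A 1 1]] := by
      ext i j
      fin_cases i <;> fin_cases j <;> simp [hγ]
    rw [hAeq, hsq, Matrix.det_fin_two_of]
    ring_nf
  · set x := A 0 0 / A 1 0 with hx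
    set y := A 0 1 - A 0 0 * A 1 1 / A 1 0 with hy
    have hdecomp : A = (Matrix.of ![![1, x], ![(0:F), 1]]) * wSwap *
        (Matrix.of ![![A 1 0, A 1 1], ![(0:F), y]]) := by
      ext i j
      fin_cases i <;> fin_cases j <;>
        simp [wSwap, Matrix.mul_apply, Fin.sum_univ_two, hx, hy] <;> field_simp <;> ring
    rw [hdecomp, sigmaMat_mul, sigmaMat_mul]
    rw [Matrix.det_mul, Matrix.det_mul, mul_pow, mul_pow, hsq, hsq, sigmaMat_swap_det_sq]
    rw [Matrix.det_mul, Matrix.det_mul, Matrix.det_fin_two_of, Matrix.det_fin_two_of]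
    show _ = ((1*1 - x*0) * wSwap.det * (A 1 0 * y - A 1 1 * 0))^(k*(k+1))
    have hw : (wSwap : Matrix (Fin 2) (Fin 2) F).det = -1 := by
      rw [show (wSwap : Matrix (Fin 2) (Fin 2) F) = Matrix.of ![![0,1],![1,0]] from rfl,
        Matrix.det_fin_two_of]
      ring
    rw [hw]
    rw [show (1*1 - x*(0:F)) * -1 * (A 1 0 * y - A 1 1 * 0) = -(A 1 0 * y) from by ring]
    rw [Even.neg_pow (Nat.even_mul_succ_self k)]
    ring

-- ==== section join ====

variable {K : Type*} [CommRing K]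

def eS (d : ℕ) (p q : ℕ → K) (i j : ℕ) : K :=
  if i < d then (if i ≤ j ∧ j ≤ i + d then p (d - (j-i)) else 0)
  else (if i - d ≤ j ∧ j ≤ (i-d)+d then q (d-(j-(i-d))) else 0)

def Smat (d : ℕ) (p q : ℕ → K) : Matrix (Fin (d+d)) (Fin (d+d)) K :=
  Matrix.of fun i j => eS d p q (i:ℕ) (j:ℕ)

lemma Smat_apply (d : ℕ) (p q : ℕ → K) (i j : Fin (d+d)) :
    Smat d p q i j = eS d p q (i:ℕ) (j:ℕ) := rfl

lemma coeff_mono_mul_toForm (a b dd : ℕ) (p : ℕ → K) (s t : ℕ) :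
    MvPolynomial.coeff (Finsupp.single (0:Fin 2) t + Finsupp.single (1:Fin 2) s)
      (X (0:Fin 2) ^ a * X 1 ^ b * toForm dd p)
      = ∑ m ∈ Finset.range (dd+1), (if m + a = t ∧ dd - m + b = s then p m else 0) := by
  rw [toForm, Finset.mul_sum, MvPolynomial.coeff_sum]
  refine Finset.sum_congr rfl fun m hm => ?_
  have hre : X (0:Fin 2) ^ a * X 1 ^ b * (C (p m) * X (0:Fin 2) ^ m * X 1 ^ (dd - m))
      = C (p m) * X (0:Fin 2) ^ (m + a) * X 1 ^ ((dd - m) + b) := by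
    rw [pow_add, pow_add]; ring
  rw [hre, term_eq, coeff_monomial]
  by_cases hc : m + a = t ∧ dd - m + b = s
  · rw [if_pos, if_pos hc]
    rw [single_add_single_eq]
    exact hc
  · rw [if_neg, if_neg hc]
    rw [single_add_single_eq]
    exact hc

lemma coeffVec_eq_coeff (dd : ℕ) (P : MvPolynomial (Fin 2) K) (t : ℕ) :
    coeffVec dd P t
      = MvPolynomial.coeff (Finsupp.single (0:Fin 2) t + Finsupp.single (1:Fin 2) (dd - t)) P :=
  rfl

lemma bridge (d : ℕ) (p q : ℕ → K) (i j : ℕ) (hi : i < d+d) (hj : j < d+d) :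
    eS d p q i j = coeffVec (d+d-1)
      (if i < d then X (0:Fin 2) ^ (d-1-i) * X 1 ^ i * toForm d p
        else X (0:Fin 2) ^ (d+d-1-i) * X 1 ^ (i-d) * toForm d q)
      (d+d-1-j) := by
  by_cases hid : i < d
  · rw [if_pos hid, coeffVec_eq_coeff, show d+d-1 - (d+d-1-j) = j from by omega,
      coeff_mono_mul_toForm]
    unfold eS
    rw [if_pos hid]
    by_cases hband : i ≤ j ∧ j ≤ i + d
    · rw [if_pos hband, Finset.sum_eq_single (d - (j - i))]
      · rw [if_pos (by omega)]
      · intro m hm hne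
        simp only [Finset.mem_range] at hm
        rw [if_neg (by omega)]
      · intro hmem
        exact absurd (Finset.mem_range.2 (by omega)) hmem
    · rw [if_neg hband, Finset.sum_eq_zero]
      intro m hm
      simp only [Finset.mem_range] at hm
      rw [if_neg (by omega)]
  · rw [if_neg hid, coeffVec_eq_coeff, show d+d-1 - (d+d-1-j) = j from by omega,
      coeff_mono_mul_toForm]
    unfold eS
    rw [if_neg hid]
    by_cases hband : i - d ≤ j ∧ j ≤ (i-d) + d
    · rw [if_pos hband, Finset.sum_eq_single (d - (j - (i-d)))]
      · rw [if_pos (by omega)]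
      · intro m hm hne
        simp only [Finset.mem_range] at hm
        rw [if_neg (by omega)]
      · intro hmem
        exact absurd (Finset.mem_range.2 (by omega)) hmem
    · rw [if_neg hband, Finset.sum_eq_zero]
      intro m hm
      simp only [Finset.mem_range] at hm
      rw [if_neg (by omega)]

lemma Smat_smul (d : ℕ) (a : K) (p q : ℕ → K) :
    Smat d (fun m => a * p m) (fun m => a * q m) = a • Smat d p q := by
  ext i j
  rw [Matrix.smul_apply, smul_eq_mul, Smat_apply, Smat_apply]
  unfold eS
  split_ifs <;> simp

def mixMat (d : ℕ) (A : Matrix (Fin 2) (Fin 2) K) : Matrix (Fin (d+d)) (Fin (d+d)) K :=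
  Matrix.of fun i t =>
    if (i:ℕ) < d then
      (if (t:ℕ) = (i:ℕ) then A 0 0 else if (t:ℕ) = (i:ℕ) + d then A 0 1 else 0)
    else
      (if (t:ℕ) = (i:ℕ) - d then A 1 0 else if (t:ℕ) = (i:ℕ) then A 1 1 else 0)

lemma mix_eq (d : ℕ) (hd : 1 ≤ d) (A : Matrix (Fin 2) (Fin 2) K) (p q : ℕ → K) :
    Smat d (fun m => A 0 0 * p m + A 0 1 * q m) (fun m => A 1 0 * p m + A 1 1 * q m)
      = mixMat d A * Smat d p q := by
  ext i j
  rw [Matrix.mul_apply]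
  by_cases hi : (i:ℕ) < d
  · have hsum : ∀ t : Fin (d+d), mixMat d A i t * Smat d p q t j
        = (if t = (⟨(i:ℕ), by omega⟩ : Fin (d+d)) then A 0 0 * eS d p q (i:ℕ) (j:ℕ) else 0)
          + (if t = (⟨(i:ℕ)+d, by omega⟩ : Fin (d+d)) then A 0 1 * eS d p q ((i:ℕ)+d) (j:ℕ) else 0) := by
      intro t
      show (if (i:ℕ) < d then _ else _) * _ = _
      rw [if_pos hi]
      by_cases h1 : (t:ℕ) = (i:ℕ)
      · rw [if_pos h1, if_pos (by exact Fin.ext h1), if_neg (by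
          intro hc
          have : (t:ℕ) = (i:ℕ)+d := congrArg Fin.val hc
          omega), Smat_apply, h1, add_zero]
      · rw [if_neg h1, if_neg (fun hc => h1 (congrArg Fin.val hc))]
        by_cases h2 : (t:ℕ) = (i:ℕ)+d
        · rw [if_pos h2, if_pos (by exact Fin.ext h2), Smat_apply, h2, zero_add]
        · rw [if_neg h2, if_neg (fun hc => h2 (congrArg Fin.val hc)), zero_mul, add_zero]
    rw [Finset.sum_congr rfl (fun t _ => hsum t), Finset.sum_add_distrib,
      Finset.sum_ite_eq' Finset.univ, Finset.sum_ite_eq' Finset.univ]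
    simp only [Finset.mem_univ, if_true]
    rw [Smat_apply]
    unfold eS
    rw [if_pos hi, if_pos hi, if_neg (show ¬ (i:ℕ)+d < d by omega)]
    rw [show (i:ℕ)+d-d = (i:ℕ) from by omega]
    split_ifs <;> ring
  · have hsum : ∀ t : Fin (d+d), mixMat d A i t * Smat d p q t j
        = (if t = (⟨(i:ℕ)-d, by omega⟩ : Fin (d+d)) then A 1 0 * eS d p q ((i:ℕ)-d) (j:ℕ) else 0)
          + (if t = (⟨(i:ℕ), by omega⟩ : Fin (d+d)) then A 1 1 * eS d p q (i:ℕ) (j:ℕ) else 0) := by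
      intro t
      show (if (i:ℕ) < d then _ else _) * _ = _
      rw [if_neg hi]
      by_cases h1 : (t:ℕ) = (i:ℕ)-d
      · rw [if_pos h1, if_pos (by exact Fin.ext h1), if_neg (by
          intro hc
          have : (t:ℕ) = (i:ℕ) := congrArg Fin.val hc
          omega), Smat_apply, h1, add_zero]
      · rw [if_neg h1, if_neg (fun hc => h1 (congrArg Fin.val hc))]
        by_cases h2 : (t:ℕ) = (i:ℕ)
        · rw [if_pos h2, if_pos (by exact Fin.ext h2), Smat_apply, h2, zero_add]
        · rw [if_neg h2, if_neg (fun hc => h2 (congrArg Fin.val hc)), zero_mul, add_zero]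
    rw [Finset.sum_congr rfl (fun t _ => hsum t), Finset.sum_add_distrib,
      Finset.sum_ite_eq' Finset.univ, Finset.sum_ite_eq' Finset.univ]
    simp only [Finset.mem_univ, if_true]
    rw [Smat_apply]
    unfold eS
    rw [if_neg hi, if_pos (show (i:ℕ)-d < d by omega), if_neg hi]
    split_ifs <;> ring

def pe (d : ℕ) : Fin (d+d) ≃ (Fin 2) × (Fin d) where
  toFun i := if h : (i:ℕ) < d then (0, ⟨(i:ℕ), h⟩) else (1, ⟨(i:ℕ) - d, by omega⟩)
  invFun x := if x.1 = 0 then ⟨(x.2:ℕ), by omega⟩ else ⟨d + (x.2:ℕ), by omega⟩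
  left_inv i := by
    by_cases h : (i:ℕ) < d <;> simp [h, Fin.ext_iff] <;> omega
  right_inv x := by
    rcases x with ⟨r, v⟩
    fin_cases r <;>
      simp [v.isLt, show ¬ (d + (v:ℕ) < d) by omega, Prod.ext_iff, Fin.ext_iff] <;> omega

lemma mixMat_eq_submatrix (d : ℕ) (A : Matrix (Fin 2) (Fin 2) K) :
    mixMat d A = (Matrix.kroneckerMap (· * ·) A (1 : Matrix (Fin d) (Fin d) K)).submatrix
      (pe d) (pe d) := by
  ext i t
  rw [Matrix.submatrix_apply]
  unfold mixMat pe
  simp only [Matrix.of_apply, Equiv.coe_fn_mk]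
  by_cases hi : (i:ℕ) < d <;> by_cases ht : (t:ℕ) < d
  · rw [dif_pos hi, dif_pos ht, if_pos hi, Matrix.kroneckerMap_apply, Matrix.one_apply]
    by_cases he : (t:ℕ) = (i:ℕ)
    · rw [if_pos he, if_pos (Fin.ext he.symm : (⟨(i:ℕ),hi⟩:Fin d) = ⟨(t:ℕ),ht⟩), mul_one]
    · rw [if_neg he, if_neg (show ¬ (t:ℕ) = (i:ℕ)+d by omega),
        if_neg (fun hc : (⟨(i:ℕ),hi⟩:Fin d) = ⟨(t:ℕ),ht⟩ => he (congrArg Fin.val hc).symm),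
        mul_zero]
  · rw [dif_pos hi, dif_neg ht, if_pos hi, Matrix.kroneckerMap_apply, Matrix.one_apply,
      if_neg (show ¬ (t:ℕ) = (i:ℕ) by omega)]
    by_cases he : (t:ℕ) = (i:ℕ)+d
    · rw [if_pos he,
        if_pos (Fin.ext (by simp; omega) : (⟨(i:ℕ),hi⟩:Fin d) = ⟨(t:ℕ)-d, by omega⟩), mul_one]
    · rw [if_neg he, if_neg (by
        intro hc
        have := congrArg Fin.val hc
        simp only at this
        omega), mul_zero]
  · rw [dif_neg hi, dif_pos ht, if_neg hi, Matrix.kroneckerMap_apply, Matrix.one_apply]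
    by_cases he : (t:ℕ) = (i:ℕ)-d
    · rw [if_pos he, if_pos (Fin.ext (by simp; omega) : (⟨(i:ℕ)-d, by omega⟩:Fin d) = ⟨(t:ℕ),ht⟩),
        mul_one]
    · rw [if_neg he, if_neg (show ¬ (t:ℕ) = (i:ℕ) by omega), if_neg (by
        intro hc
        have := congrArg Fin.val hc
        simp only at this
        omega), mul_zero]
  · rw [dif_neg hi, dif_neg ht, if_neg hi, Matrix.kroneckerMap_apply, Matrix.one_apply,
      if_neg (show ¬ (t:ℕ) = (i:ℕ)-d by omega)]
    by_cases he : (t:ℕ) = (i:ℕ)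
    · rw [if_pos he,
        if_pos (Fin.ext (by simp; omega) : (⟨(i:ℕ)-d, by omega⟩:Fin d) = ⟨(t:ℕ)-d, by omega⟩),
        mul_one]
    · rw [if_neg he, if_neg (by
        intro hc
        have := congrArg Fin.val hc
        simp only at this
        omega), mul_zero]

lemma mixMat_det (d : ℕ) (A : Matrix (Fin 2) (Fin 2) K) :
    (mixMat d A).det = A.det ^ d := by
  rw [mixMat_eq_submatrix, Matrix.det_submatrix_equiv_self, Matrix.det_kronecker]
  simp

-- ==== section join ====

variable {K : Type*} [CommRing K]

def eRow (d : ℕ) (r : ℕ → K) (i' j' : ℕ) : K :=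
  if i' ≤ j' ∧ j' ≤ i' + d then r (d - (j'-i')) else 0

lemma eS_top (d : ℕ) (p q : ℕ → K) (i j : ℕ) (hi : i < d) :
    eS d p q i j = eRow d p i j := by
  unfold eS eRow
  rw [if_pos hi]

lemma eS_bot (d : ℕ) (p q : ℕ → K) (i j : ℕ) (hi : ¬ i < d) :
    eS d p q i j = eRow d q (i-d) j := by
  unfold eS eRow
  rw [if_neg hi]

lemma bridge_row (d : ℕ) (r : ℕ → K) (i' j' : ℕ) (hi : i' < d) (hj : j' < d+d) :
    eRow d r i' j' = coeffVec (d+d-1)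
      (X (0:Fin 2) ^ (d-1-i') * X 1 ^ i' * toForm d r) (d+d-1-j') := by
  have h := bridge d r r i' j' (by omega) hj
  unfold eS at h
  rw [if_pos hi, if_pos hi] at h
  exact h

def eR (k : ℕ) (B : Matrix (Fin 2) (Fin 2) K) (i i' : ℕ) : K :=
  if i < k+1 then
    (if i' < k+1 then coeffVec k (substMat B (X (0:Fin 2) ^ (k-i) * X 1 ^ i)) (k - i') else 0)
  else
    (if k+1 ≤ i' then
      coeffVec k (substMat B (X (0:Fin 2) ^ (k-(i-(k+1))) * X 1 ^ (i-(k+1)))) (k - (i'-(k+1)))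
    else 0)

def Rbig (k : ℕ) (B : Matrix (Fin 2) (Fin 2) K) :
    Matrix (Fin ((k+1)+(k+1))) (Fin ((k+1)+(k+1))) K :=
  Matrix.of fun i i' => eR k B (i:ℕ) (i':ℕ)

def eC (k : ℕ) (A : Matrix (Fin 2) (Fin 2) K) (j' j : ℕ) : K :=
  coeffVec (k+k+1) (substMat A (X (0:Fin 2) ^ ((k+k+1)-j') * X 1 ^ j')) ((k+k+1)-j)

def Cbig (k : ℕ) (A : Matrix (Fin 2) (Fin 2) K) :
    Matrix (Fin ((k+1)+(k+1))) (Fin ((k+1)+(k+1))) K :=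
  Matrix.of fun j' j => eC k A (j':ℕ) (j:ℕ)

lemma master_row (k : ℕ) {F : Type*} [Field F] (A : Matrix (Fin 2) (Fin 2) F) (hA : A.det ≠ 0)
    (r : ℕ → F) (b j : ℕ) (hb : b ≤ k) (hj : j < (k+1)+(k+1)) :
    coeffVec (k+k+1) (X (0:Fin 2) ^ (k-b) * X 1 ^ b * substMat A (toForm (k+1) r)) ((k+k+1)-j)
      = ∑ i' ∈ Finset.range (k+1),
          coeffVec k (substMat A⁻¹ (X (0:Fin 2) ^ (k-b) * X 1 ^ b)) (k-i')
            * (∑ j' ∈ Finset.range ((k+1)+(k+1)), eRow (k+1) r i' j' * eC k A j' j) := by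
  have hAu : IsUnit A.det := hA.isUnit
  have hmono_hom : ((X (0:Fin 2) ^ (k-b) * X 1 ^ b : MvPolynomial (Fin 2) F)).IsHomogeneous k := by
    have := mono_isHomogeneous (K := F) (k-b) b
    rwa [Nat.sub_add_cancel hb] at this
  set w : ℕ → F := coeffVec k (substMat A⁻¹ (X (0:Fin 2) ^ (k-b) * X 1 ^ b)) with hw
  have key : X (0:Fin 2) ^ (k-b) * X 1 ^ b * substMat A (toForm (k+1) r)
      = ∑ i' ∈ Finset.range (k+1), C (w i')
          * substMat A (X (0:Fin 2) ^ i' * X 1 ^ (k-i') * toForm (k+1) r) := by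
    conv_lhs => rw [show (X (0:Fin 2) ^ (k-b) * X 1 ^ b : MvPolynomial (Fin 2) F)
        = substMat A (toForm k w) from by
      rw [hw, toForm_coeffVec (substMat_isHomogeneous hmono_hom A⁻¹), substMat_substMat,
        Matrix.nonsing_inv_mul A hAu, substMat_one]]
    rw [← substMat_mul, toForm_eq_sum_mono, Finset.sum_mul, substMat_sum]
    refine Finset.sum_congr rfl fun i' _ => ?_
    rw [show C (w i') * (X (0:Fin 2) ^ i' * X 1 ^ (k-i')) * toForm (k+1) r
        = C (w i') * (X (0:Fin 2) ^ i' * X 1 ^ (k-i') * toForm (k+1) r) from by ring,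
      substMat_mul, substMat_C]
  rw [key, coeffVec_sum]
  have hterm : ∀ i' ∈ Finset.range (k+1),
      coeffVec (k+k+1) (C (w i')
          * substMat A (X (0:Fin 2) ^ i' * X 1 ^ (k-i') * toForm (k+1) r)) ((k+k+1)-j)
        = w i' * (∑ j' ∈ Finset.range ((k+1)+(k+1)), eRow (k+1) r (k-i') j' * eC k A j' j) := by
    intro i' hi'
    simp only [Finset.mem_range] at hi'
    rw [coeffVec_C_mul]
    congr 1
    have hQhom : ((X (0:Fin 2) ^ i' * X 1 ^ (k-i') * toForm (k+1) r :
        MvPolynomial (Fin 2) F)).IsHomogeneous (k+k+1) := by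
      have := (mono_isHomogeneous (K := F) i' (k-i')).mul (toForm_isHomogeneous (k+1) r)
      rwa [show i' + (k-i') + (k+1) = k+k+1 by omega] at this
    conv_lhs => rw [show (X (0:Fin 2) ^ i' * X 1 ^ (k-i') * toForm (k+1) r :
        MvPolynomial (Fin 2) F)
        = toForm (k+k+1) (coeffVec (k+k+1)
            (X (0:Fin 2) ^ i' * X 1 ^ (k-i') * toForm (k+1) r)) from (toForm_coeffVec hQhom).symm]
    rw [coeffVec_substMat_toForm]
    rw [← Finset.sum_range_reflect (fun j₀ =>
      coeffVec (k+k+1) (substMat A (X (0:Fin 2) ^ j₀ * X 1 ^ ((k+k+1) - j₀))) ((k+k+1)-j)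
        * coeffVec (k+k+1) (X (0:Fin 2) ^ i' * X 1 ^ (k-i') * toForm (k+1) r) j₀) ((k+k+1)+1)]
    rw [show (k+1)+(k+1) = (k+k+1)+1 from by omega]
    refine Finset.sum_congr rfl fun j' hj' => ?_
    simp only [Finset.mem_range] at hj'
    rw [show (k+k+1)+1-1-j' = (k+k+1)-j' from by omega]
    rw [show (k+k+1) - ((k+k+1)-j') = j' from by omega]
    rw [bridge_row (k+1) r (k-i') j' (by omega) (by omega)]
    rw [show (k+1)+(k+1)-1 = k+k+1 from by omega, show (k+1)-1-(k-i') = i' from by omega]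
    rw [mul_comm]
    rfl
  rw [Finset.sum_congr rfl hterm]
  rw [← Finset.sum_range_reflect (fun i' => w i'
    * (∑ j' ∈ Finset.range ((k+1)+(k+1)), eRow (k+1) r (k-i') j' * eC k A j' j)) (k+1)]
  refine Finset.sum_congr rfl fun i' hi' => ?_
  simp only [Finset.mem_range] at hi'
  rw [show (k+1)-1-i' = k-i' from by omega, show k - (k-i') = i' from by omega]

lemma masterN (k : ℕ) {F : Type*} [Field F] (A : Matrix (Fin 2) (Fin 2) F) (hA : A.det ≠ 0)
    (p q : ℕ → F) (i j : ℕ) (hi : i < (k+1)+(k+1)) (hj : j < (k+1)+(k+1)) :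
    eS (k+1) (coeffVec (k+1) (substMat A (toForm (k+1) p)))
        (coeffVec (k+1) (substMat A (toForm (k+1) q))) i j
      = ∑ i' ∈ Finset.range ((k+1)+(k+1)), eR k A⁻¹ i i' *
          (∑ j' ∈ Finset.range ((k+1)+(k+1)), eS (k+1) p q i' j' * eC k A j' j) := by
  have hsubset : Finset.range (k+1) ⊆ Finset.range ((k+1)+(k+1)) := by
    intro x hx
    simp only [Finset.mem_range] at *
    omega
  by_cases hid : i < k+1
  · rw [eS_top _ _ _ _ _ hid, bridge_row (k+1) _ i j hid (by omega)]
    rw [show (k+1)+(k+1)-1 = k+k+1 from by omega, show (k+1)-1-i = k-i from by omega]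
    rw [toForm_coeffVec (substMat_toForm_isHomogeneous A (k+1) p)]
    rw [master_row k A hA p i j (by omega) hj]
    rw [← Finset.sum_subset hsubset (fun x hx hnx => by
      rw [show eR k A⁻¹ i x = 0 from by
        unfold eR
        rw [if_pos hid, if_neg (by simp only [Finset.mem_range] at hnx; omega)], zero_mul])]
    refine Finset.sum_congr rfl fun i' hi' => ?_
    simp only [Finset.mem_range] at hi'
    rw [show eR k A⁻¹ i i' = coeffVec k (substMat A⁻¹ (X (0:Fin 2) ^ (k-i) * X 1 ^ i)) (k-i')
      from by unfold eR; rw [if_pos hid, if_pos hi']]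
    congr 1
    exact Finset.sum_congr rfl fun j' _ => by rw [eS_top _ _ _ _ _ hi']
  · rw [eS_bot _ _ _ _ _ hid, bridge_row (k+1) _ (i-(k+1)) j (by omega) (by omega)]
    rw [show (k+1)+(k+1)-1 = k+k+1 from by omega,
      show (k+1)-1-(i-(k+1)) = k-(i-(k+1)) from by omega]
    rw [toForm_coeffVec (substMat_toForm_isHomogeneous A (k+1) q)]
    rw [master_row k A hA q (i-(k+1)) j (by omega) hj]
    have hvanish : ∀ x ∈ Finset.range ((k+1)+(k+1)), x ∉ Finset.Ico (k+1) ((k+1)+(k+1)) →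
        eR k A⁻¹ i x * (∑ j' ∈ Finset.range ((k+1)+(k+1)), eS (k+1) p q x j' * eC k A j' j)
          = 0 := by
      intro x hx hnx
      simp only [Finset.mem_range] at hx
      simp only [Finset.mem_Ico] at hnx
      rw [show eR k A⁻¹ i x = 0 from by
        unfold eR
        rw [if_neg hid, if_neg (by omega)], zero_mul]
    rw [← Finset.sum_subset (by intro x hx; simp only [Finset.mem_Ico, Finset.mem_range] at *; omega :
        Finset.Ico (k+1) ((k+1)+(k+1)) ⊆ Finset.range ((k+1)+(k+1))) hvanish]
    rw [Finset.sum_Ico_eq_sum_range]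
    rw [show (k+1)+(k+1)-(k+1) = k+1 from by omega]
    refine Finset.sum_congr rfl fun i' hi' => ?_
    simp only [Finset.mem_range] at hi'
    rw [show eR k A⁻¹ i ((k+1)+i')
        = coeffVec k (substMat A⁻¹ (X (0:Fin 2) ^ (k-(i-(k+1))) * X 1 ^ (i-(k+1)))) (k-i')
      from by unfold eR; rw [if_neg hid, if_pos (by omega), show (k+1)+i'-(k+1) = i' from by omega]]
    congr 1
    exact Finset.sum_congr rfl fun j' _ => by
      rw [eS_bot _ _ _ _ _ (show ¬ (k+1)+i' < k+1 by omega),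
        show (k+1)+i'-(k+1) = i' from by omega]

lemma master (k : ℕ) {F : Type*} [Field F] (A : Matrix (Fin 2) (Fin 2) F) (hA : A.det ≠ 0)
    (p q : ℕ → F) :
    Smat (k+1) (coeffVec (k+1) (substMat A (toForm (k+1) p)))
        (coeffVec (k+1) (substMat A (toForm (k+1) q)))
      = Rbig k A⁻¹ * (Smat (k+1) p q * Cbig k A) := by
  ext i j
  rw [Matrix.mul_apply]
  have hinner : ∀ x : Fin ((k+1)+(k+1)), (Smat (k+1) p q * Cbig k A) x j
      = ∑ j' ∈ Finset.range ((k+1)+(k+1)), eS (k+1) p q (x:ℕ) j' * eC k A j' (j:ℕ) := by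
    intro x
    rw [Matrix.mul_apply]
    exact Fin.sum_univ_eq_sum_range (fun j' => eS (k+1) p q (x:ℕ) j' * eC k A j' (j:ℕ)) _
  rw [Finset.sum_congr rfl (fun x _ => by rw [hinner x])]
  rw [Smat_apply]
  rw [masterN k A hA p q (i:ℕ) (j:ℕ) i.isLt j.isLt]
  exact (Fin.sum_univ_eq_sum_range (fun i' => eR k A⁻¹ (i:ℕ) i' *
    (∑ j' ∈ Finset.range ((k+1)+(k+1)), eS (k+1) p q i' j' * eC k A j' (j:ℕ))) _).symm

def revP (m : ℕ) : Fin (m+1) ≃ Fin (m+1) where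
  toFun x := ⟨m - (x:ℕ), by omega⟩
  invFun x := ⟨m - (x:ℕ), by omega⟩
  left_inv x := Fin.ext (by have := x.isLt; simp only; omega)
  right_inv x := Fin.ext (by have := x.isLt; simp only; omega)

def eNk (k : ℕ) : Fin ((k+1)+(k+1)) ≃ Fin ((k+k+1)+1) where
  toFun x := ⟨(k+k+1) - (x:ℕ), by omega⟩
  invFun x := ⟨(k+k+1) - (x:ℕ), by have := x.isLt; omega⟩
  left_inv x := Fin.ext (by have := x.isLt; simp only; omega)
  right_inv x := Fin.ext (by have := x.isLt; simp only; omega)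

lemma Cbig_det (k : ℕ) (A : Matrix (Fin 2) (Fin 2) K) :
    (Cbig k A).det = (sigmaMat (k+k+1) A).det := by
  have hC : Cbig k A = ((sigmaMat (k+k+1) A).transpose).submatrix (eNk k) (eNk k) := by
    ext j' j
    rw [Matrix.submatrix_apply, Matrix.transpose_apply]
    show eC k A (j':ℕ) (j:ℕ) = sigmaMat (k+k+1) A (eNk k j) (eNk k j')
    show eC k A (j':ℕ) (j:ℕ) = coeffVec (k+k+1)
      (substMat A (X (0:Fin 2) ^ ((k+k+1)-(j':ℕ)) * X 1 ^ ((k+k+1)-((k+k+1)-(j':ℕ)))))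
      ((k+k+1)-(j:ℕ))
    rw [show (k+k+1)-((k+k+1)-(j':ℕ)) = (j':ℕ) from by have := j'.isLt; omega]
    rfl
  rw [hC, Matrix.det_submatrix_equiv_self, Matrix.det_transpose]

def Bmat (k : ℕ) (B : Matrix (Fin 2) (Fin 2) K) : Matrix (Fin (k+1)) (Fin (k+1)) K :=
  Matrix.of fun i i' => coeffVec k (substMat B (X (0:Fin 2) ^ (k-(i:ℕ)) * X 1 ^ (i:ℕ))) (k-(i':ℕ))

lemma Bmat_det (k : ℕ) (B : Matrix (Fin 2) (Fin 2) K) :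
    (Bmat k B).det = (sigmaMat k B).det := by
  have hB : Bmat k B = ((sigmaMat k B).transpose).submatrix (revP k) (revP k) := by
    ext i i'
    rw [Matrix.submatrix_apply, Matrix.transpose_apply]
    show _ = sigmaMat k B (revP k i') (revP k i)
    show coeffVec k (substMat B (X (0:Fin 2) ^ (k-(i:ℕ)) * X 1 ^ (i:ℕ))) (k-(i':ℕ))
      = coeffVec k (substMat B (X (0:Fin 2) ^ (k-(i:ℕ)) * X 1 ^ (k-(k-(i:ℕ))))) (k-(i':ℕ))
    rw [show k-(k-(i:ℕ)) = (i:ℕ) from by have := i.isLt; omega]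
  rw [hB, Matrix.det_submatrix_equiv_self, Matrix.det_transpose]

lemma Rbig_eq (k : ℕ) (B : Matrix (Fin 2) (Fin 2) K) :
    Rbig k B = (Matrix.fromBlocks (Bmat k B) 0 0 (Bmat k B)).submatrix
      finSumFinEquiv.symm finSumFinEquiv.symm := by
  ext i i'
  obtain ⟨x, rfl⟩ : ∃ x, finSumFinEquiv x = i := ⟨_, Equiv.apply_symm_apply _ i⟩
  obtain ⟨y, rfl⟩ : ∃ y, finSumFinEquiv y = i' := ⟨_, Equiv.apply_symm_apply _ i'⟩
  rw [Matrix.submatrix_apply, Equiv.symm_apply_apply, Equiv.symm_apply_apply]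
  rcases x with a | a <;> rcases y with b | b <;>
    simp only [finSumFinEquiv_apply_left, finSumFinEquiv_apply_right,
      Matrix.fromBlocks_apply₁₁, Matrix.fromBlocks_apply₁₂, Matrix.fromBlocks_apply₂₁,
      Matrix.fromBlocks_apply₂₂, Matrix.zero_apply]
  · show eR k B ((Fin.castAdd (k+1) a : Fin ((k+1)+(k+1))):ℕ) ((Fin.castAdd (k+1) b :
      Fin ((k+1)+(k+1))):ℕ) = Bmat k B a b
    rw [Fin.coe_castAdd, Fin.coe_castAdd]
    unfold eR
    rw [if_pos a.isLt, if_pos b.isLt]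
    rfl
  · show eR k B ((Fin.castAdd (k+1) a : Fin ((k+1)+(k+1))):ℕ) ((Fin.natAdd (k+1) b :
      Fin ((k+1)+(k+1))):ℕ) = 0
    rw [Fin.coe_castAdd, Fin.coe_natAdd]
    unfold eR
    rw [if_pos a.isLt, if_neg (by omega)]
  · show eR k B ((Fin.natAdd (k+1) a : Fin ((k+1)+(k+1))):ℕ) ((Fin.castAdd (k+1) b :
      Fin ((k+1)+(k+1))):ℕ) = 0
    rw [Fin.coe_natAdd, Fin.coe_castAdd]
    unfold eR
    rw [if_neg (by omega), if_neg (by have := b.isLt; omega)]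
  · show eR k B ((Fin.natAdd (k+1) a : Fin ((k+1)+(k+1))):ℕ) ((Fin.natAdd (k+1) b :
      Fin ((k+1)+(k+1))):ℕ) = Bmat k B a b
    rw [Fin.coe_natAdd, Fin.coe_natAdd]
    unfold eR
    rw [if_neg (by omega), if_pos (by omega)]
    rw [show (k+1)+(a:ℕ)-(k+1) = (a:ℕ) from by omega, show (k+1)+(b:ℕ)-(k+1) = (b:ℕ) from by omega]
    rfl

lemma Rbig_det (k : ℕ) (B : Matrix (Fin 2) (Fin 2) K) :
    (Rbig k B).det = ((sigmaMat k B).det)^2 := by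
  rw [Rbig_eq, Matrix.det_submatrix_equiv_self, Matrix.det_fromBlocks_zero₂₁, Bmat_det, sq]

-- ==== section join ====

variable {K : Type*} [CommRing K]

lemma sylRes_eq_det (d : ℕ) (p q : ℕ → K) : sylRes d d p q = (Smat d p q).det := rfl

lemma coeffVec_add (d : ℕ) (P Q : MvPolynomial (Fin 2) K) (t : ℕ) :
    coeffVec d (P + Q) t = coeffVec d P t + coeffVec d Q t := by
  unfold coeffVec
  rw [MvPolynomial.coeff_add]

lemma law (k : ℕ) {F : Type*} [Field F] (f g : ℕ → F) (l : F)
    (A : Matrix (Fin 2) (Fin 2) F) (hA : A.det ≠ 0) :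
    (sylRes (k+1) (k+1) (fun i => l * FA (k+1) f g A i) (fun i => l * GA (k+1) f g A i))^2
      = (l^2 * A.det^(k+2))^(2*(k+1)) * (sylRes (k+1) (k+1) f g)^2 := by
  set SF := substMat A (toForm (k+1) f) with hSF
  set SG := substMat A (toForm (k+1) g) with hSG
  have hp : (fun m => A 0 0 * (l * FA (k+1) f g A m) + A 0 1 * (l * GA (k+1) f g A m))
      = fun m => (l * A.det) * coeffVec (k+1) SF m := by
    funext m
    show A 0 0 * (l * coeffVec (k+1) (C (A 1 1) * SF - C (A 0 1) * SG) m)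
        + A 0 1 * (l * coeffVec (k+1) (-(C (A 1 0)) * SF + C (A 0 0) * SG) m) = _
    have hpoly : C (A 0 0 * l) * (C (A 1 1) * SF - C (A 0 1) * SG)
        + C (A 0 1 * l) * (-(C (A 1 0)) * SF + C (A 0 0) * SG) = C (l * A.det) * SF := by
      rw [Matrix.det_fin_two]
      push_cast [map_mul, map_sub, map_add]
      ring
    have := congrArg (fun P => coeffVec (k+1) P m) hpoly
    rw [coeffVec_add, coeffVec_C_mul, coeffVec_C_mul, coeffVec_C_mul] at this
    rw [← this]
    ring
  have hq : (fun m => A 1 0 * (l * FA (k+1) f g A m) + A 1 1 * (l * GA (k+1) f g A m))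
      = fun m => (l * A.det) * coeffVec (k+1) SG m := by
    funext m
    show A 1 0 * (l * coeffVec (k+1) (C (A 1 1) * SF - C (A 0 1) * SG) m)
        + A 1 1 * (l * coeffVec (k+1) (-(C (A 1 0)) * SF + C (A 0 0) * SG) m) = _
    have hpoly : C (A 1 0 * l) * (C (A 1 1) * SF - C (A 0 1) * SG)
        + C (A 1 1 * l) * (-(C (A 1 0)) * SF + C (A 0 0) * SG) = C (l * A.det) * SG := by
      rw [Matrix.det_fin_two]
      push_cast [map_mul, map_sub, map_add]
      ring
    have := congrArg (fun P => coeffVec (k+1) P m) hpoly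
    rw [coeffVec_add, coeffVec_C_mul, coeffVec_C_mul, coeffVec_C_mul] at this
    rw [← this]
    ring
  have hbig : mixMat (k+1) A * Smat (k+1) (fun i => l * FA (k+1) f g A i)
        (fun i => l * GA (k+1) f g A i)
      = (l * A.det) • (Rbig k A⁻¹ * (Smat (k+1) f g * Cbig k A)) := by
    rw [← mix_eq (k+1) (by omega) A, hp, hq, Smat_smul, hSF, hSG, master k A hA f g]
  have E1 : A.det^(k+1) * sylRes (k+1) (k+1) (fun i => l * FA (k+1) f g A i)
        (fun i => l * GA (k+1) f g A i)
      = (l * A.det)^((k+1)+(k+1)) * ((Rbig k (A⁻¹ : Matrix (Fin 2) (Fin 2) F)).det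
          * (sylRes (k+1) (k+1) f g * (Cbig k A).det)) := by
    have h2 := congrArg Matrix.det hbig
    rw [Matrix.det_mul, mixMat_det, Matrix.det_smul, Fintype.card_fin, Matrix.det_mul,
      Matrix.det_mul] at h2
    rw [sylRes_eq_det, sylRes_eq_det]
    linear_combination h2
  have hRdet : (Rbig k (A⁻¹ : Matrix (Fin 2) (Fin 2) F)).det = (A.det⁻¹)^(k*(k+1)) := by
    rw [Rbig_det, sigmaMat_det_sq k A⁻¹ (by
      rw [Matrix.det_nonsing_inv, Ring.inverse_eq_inv']
      exact inv_ne_zero hA), Matrix.det_nonsing_inv, Ring.inverse_eq_inv']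
  have hCdet : ((Cbig k A).det)^2 = A.det^((k+k+1)*((k+k+1)+1)) := by
    rw [Cbig_det, sigmaMat_det_sq (k+k+1) A hA]
  have E1' : A.det^(k*(k+1)) * (A.det^(k+1) * sylRes (k+1) (k+1)
        (fun i => l * FA (k+1) f g A i) (fun i => l * GA (k+1) f g A i))
      = (l * A.det)^((k+1)+(k+1)) * (sylRes (k+1) (k+1) f g * (Cbig k A).det) := by
    rw [E1, hRdet]
    calc A.det^(k*(k+1)) * ((l * A.det)^((k+1)+(k+1)) * ((A.det⁻¹)^(k*(k+1))
          * (sylRes (k+1) (k+1) f g * (Cbig k A).det)))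
        = (A.det * A.det⁻¹)^(k*(k+1)) * ((l * A.det)^((k+1)+(k+1))
            * (sylRes (k+1) (k+1) f g * (Cbig k A).det)) := by
          rw [mul_pow]
          ring
      _ = _ := by rw [mul_inv_cancel₀ hA, one_pow, one_mul]
  have E1sq := congrArg (fun x => x^2) E1'
  rw [mul_pow (A.det ^ (k*(k+1))) _ 2, mul_pow (A.det^(k+1)) _ 2,
    mul_pow ((l*A.det)^((k+1)+(k+1))) _ 2, mul_pow (sylRes (k+1) (k+1) f g) _ 2, hCdet] at E1sq
  have final : (A.det^(k*(k+1)))^2 * ((A.det^(k+1))^2 * ((sylRes (k+1) (k+1)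
        (fun i => l * FA (k+1) f g A i) (fun i => l * GA (k+1) f g A i))^2))
      = (A.det^(k*(k+1)))^2 * ((A.det^(k+1))^2 * ((l^2 * A.det^(k+2))^(2*(k+1))
          * (sylRes (k+1) (k+1) f g)^2)) := by
    calc (A.det^(k*(k+1)))^2 * ((A.det^(k+1))^2 * ((sylRes (k+1) (k+1)
          (fun i => l * FA (k+1) f g A i) (fun i => l * GA (k+1) f g A i))^2))
        = (A.det^(k*(k+1)))^2 * (A.det^(k+1) * sylRes (k+1) (k+1)
            (fun i => l * FA (k+1) f g A i) (fun i => l * GA (k+1) f g A i))^2 := by ring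
      _ = ((l*A.det)^((k+1)+(k+1)))^2 * ((sylRes (k+1) (k+1) f g)^2
            * A.det^((k+k+1)*((k+k+1)+1))) := by
          rw [← E1sq]
          ring
      _ = _ := by ring
  exact mul_left_cancel₀ (pow_ne_zero 2 (pow_ne_zero (k+1) hA))
    (mul_left_cancel₀ (pow_ne_zero 2 (pow_ne_zero (k*(k+1)) hA)) final)

-- ==== section join ====

def fv (n : ℕ) (c : ℚ) : ℕ → ℚ := fun i => if i = 2*n+1 then 1 else if i = 0 then -c^(n+1) else 0
def gv (n : ℕ) : ℕ → ℚ := fun i => if i = n then 1 else 0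
def fv' (n : ℕ) (c : ℚ) : ℕ → ℚ := fun i => if i = 2*n+1 then c^n else if i = 0 then -1 else 0

lemma substMat_diag {K : Type*} [CommRing K] (a b : K) (dd : ℕ) (h : ℕ → K) :
    substMat (Matrix.of ![![a, 0], ![0, b]]) (toForm dd h)
      = toForm dd (fun i => a^i * b^(dd-i) * h i) := by
  rw [substMat_toForm, toForm]
  refine Finset.sum_congr rfl fun i hi => ?_
  have h00 : (Matrix.of ![![a, (0:K)], ![0, b]]) 0 0 = a := rfl
  have h01 : (Matrix.of ![![a, (0:K)], ![0, b]]) 0 1 = 0 := rfl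
  have h10 : (Matrix.of ![![a, (0:K)], ![0, b]]) 1 0 = 0 := rfl
  have h11 : (Matrix.of ![![a, (0:K)], ![0, b]]) 1 1 = b := rfl
  rw [h00, h01, h10, h11, map_zero, zero_mul, add_zero, zero_mul, zero_add,
    mul_pow, mul_pow, ← C_pow, ← C_pow, map_mul, map_mul]
  ring

lemma FA_diag (n : ℕ) (c : ℚ) (i : ℕ) :
    FA (2*n+1) (fv n c) (gv n) (Matrix.of ![![(c:ℚ), 0], ![0, 1]]) i
      = if i ≤ 2*n+1 then c^i * fv n c i else 0 := by
  unfold FA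
  rw [show (Matrix.of ![![(c:ℚ), 0], ![0, 1]]) 1 1 = 1 from rfl,
    show (Matrix.of ![![(c:ℚ), 0], ![0, 1]]) 0 1 = 0 from rfl,
    map_one, one_mul, map_zero, zero_mul, sub_zero, substMat_diag, coeffVec_toForm]
  split_ifs <;> simp <;> ring

lemma GA_diag (n : ℕ) (c : ℚ) (i : ℕ) :
    GA (2*n+1) (fv n c) (gv n) (Matrix.of ![![(c:ℚ), 0], ![0, 1]]) i
      = if i ≤ 2*n+1 then c^(i+1) * gv n i else 0 := by
  unfold GA
  rw [show (Matrix.of ![![(c:ℚ), 0], ![0, 1]]) 1 0 = 0 from rfl,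
    show (Matrix.of ![![(c:ℚ), 0], ![0, 1]]) 0 0 = c from rfl,
    map_zero, neg_zero, zero_mul, zero_add, substMat_diag, coeffVec_C_mul, coeffVec_toForm]
  split_ifs <;> simp <;> ring

lemma bullet1 (n : ℕ) (hn : 1 ≤ n) (c : ℚ) (hc0 : c ≠ 0) : ∀ i,
    fv' n c i = c ^ (-((n : ℤ) + 1)) *
      FA (2*n+1) (fv n c) (gv n) (Matrix.of ![![(c:ℚ), 0], ![0, 1]]) i := by
  intro i
  rw [FA_diag]
  by_cases hle : i ≤ 2*n+1
  · rw [if_pos hle]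
    unfold fv fv'
    by_cases h1 : i = 2*n+1
    · subst h1
      rw [if_pos rfl, if_pos rfl, mul_one]
      rw [show (c^(2*n+1) : ℚ) = c^(((2*n+1:ℕ) : ℤ)) from (zpow_natCast c (2*n+1)).symm,
        ← zpow_add₀ hc0, show (-((n:ℤ)+1) + ((2*n+1:ℕ):ℤ)) = (n:ℤ) from by push_cast; ring,
        zpow_natCast]
    · rw [if_neg h1]
      by_cases h0 : i = 0
      · subst h0
        rw [if_pos rfl, if_pos rfl, if_neg h1, pow_zero, one_mul]
        rw [show (-(c^(n+1)) : ℚ) = -(c^(((n+1:ℕ)):ℤ)) from by rw [zpow_natCast],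
          mul_neg, ← zpow_add₀ hc0,
          show (-((n:ℤ)+1) + ((n+1:ℕ):ℤ)) = 0 from by push_cast; ring, zpow_zero]
      · rw [if_neg h0, if_neg h1, if_neg h0, mul_zero, mul_zero]
  · rw [if_neg hle, mul_zero]
    unfold fv'
    rw [if_neg (by omega), if_neg (by omega)]

lemma bullet2 (n : ℕ) (c : ℚ) (hc0 : c ≠ 0) : ∀ i,
    gv n i = c ^ (-((n : ℤ) + 1)) *
      GA (2*n+1) (fv n c) (gv n) (Matrix.of ![![(c:ℚ), 0], ![0, 1]]) i := by
  intro i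
  rw [GA_diag]
  by_cases hle : i ≤ 2*n+1
  · rw [if_pos hle]
    unfold gv
    by_cases h1 : i = n
    · subst h1
      rw [if_pos rfl, mul_one]
      rw [show (c^(i+1) : ℚ) = c^(((i+1:ℕ)):ℤ) from (zpow_natCast c (i+1)).symm,
        ← zpow_add₀ hc0, show (-((i:ℤ)+1) + ((i+1:ℕ):ℤ)) = 0 from by push_cast; ring, zpow_zero]
    · rw [if_neg h1, mul_zero, mul_zero]
  · rw [if_neg hle, mul_zero]
    unfold gv
    rw [if_neg (by omega)]

-- ==== section join ====

def bz (n d i : ℕ) : ℤ := if i < d then (n:ℤ) + i else (i:ℤ) - d + n + 1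

lemma smat_scale (n : ℕ) (c : ℚ) (hc0 : c ≠ 0) :
    Smat (2*n+1) (fv' n c) (gv n)
      = Matrix.diagonal (fun i : Fin ((2*n+1)+(2*n+1)) => c ^ (bz n (2*n+1) (i:ℕ)))
        * Smat (2*n+1) (fv n c) (gv n)
        * Matrix.diagonal (fun j : Fin ((2*n+1)+(2*n+1)) => c ^ (-((j:ℕ):ℤ))) := by
  ext i j
  rw [Matrix.mul_diagonal, Matrix.diagonal_mul, Smat_apply, Smat_apply]
  unfold eS bz
  by_cases hi : (i:ℕ) < 2*n+1
  · rw [if_pos hi, if_pos hi, if_pos hi]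
    by_cases hband : (i:ℕ) ≤ (j:ℕ) ∧ (j:ℕ) ≤ (i:ℕ) + (2*n+1)
    · rw [if_pos hband, if_pos hband]
      unfold fv fv'
      by_cases h1 : 2*n+1 - ((j:ℕ)-(i:ℕ)) = 2*n+1
      · rw [if_pos h1, if_pos h1, mul_one]
        rw [← zpow_add₀ hc0, show ((n:ℤ) + ((i:ℕ):ℤ)) + (-((j:ℕ):ℤ)) = (n:ℤ) from by omega,
          zpow_natCast]
      · rw [if_neg h1, if_neg h1]
        by_cases h0 : 2*n+1 - ((j:ℕ)-(i:ℕ)) = 0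
        · rw [if_pos h0, if_pos h0]
          rw [show (c:ℚ)^(n+1) = c^(((n+1:ℕ)):ℤ) from (zpow_natCast _ _).symm]
          rw [mul_neg, neg_mul, ← zpow_add₀ hc0, ← zpow_add₀ hc0,
            show ((n:ℤ) + ((i:ℕ):ℤ)) + (((n+1:ℕ)):ℤ) + (-((j:ℕ):ℤ)) = 0 from by push_cast; omega,
            zpow_zero]
        · rw [if_neg h0, if_neg h0]
          simp
    · rw [if_neg hband, if_neg hband, mul_zero, zero_mul]
  · rw [if_neg hi, if_neg hi, if_neg hi]
    by_cases hband : (i:ℕ)-(2*n+1) ≤ (j:ℕ) ∧ (j:ℕ) ≤ ((i:ℕ)-(2*n+1))+(2*n+1)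
    · rw [if_pos hband]
      unfold gv
      by_cases h1 : 2*n+1 - ((j:ℕ) - ((i:ℕ)-(2*n+1))) = n
      · rw [if_pos h1, mul_one]
        rw [← zpow_add₀ hc0,
          show (((i:ℕ):ℤ) - ((2*n+1:ℕ):ℤ) + (n:ℤ) + 1) + (-((j:ℕ):ℤ)) = 0 from by
            push_cast; omega,
          zpow_zero]
      · rw [if_neg h1]
        simp
    · rw [if_neg hband]
      simp

lemma bullet3 (n : ℕ) (c : ℚ) (hc0 : c ≠ 0) :
    sylRes (2*n+1) (2*n+1) (fv n c) (gv n) = sylRes (2*n+1) (2*n+1) (fv' n c) (gv n) := by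
  rw [sylRes_eq_det, sylRes_eq_det, smat_scale n c hc0, Matrix.det_mul, Matrix.det_mul,
    Matrix.det_diagonal, Matrix.det_diagonal]
  rw [show (∏ i : Fin ((2*n+1)+(2*n+1)), c ^ (bz n (2*n+1) (i:ℕ)))
        * (Smat (2*n+1) (fv n c) (gv n)).det
        * (∏ j : Fin ((2*n+1)+(2*n+1)), c ^ (-((j:ℕ):ℤ)))
      = (∏ i : Fin ((2*n+1)+(2*n+1)), c ^ (bz n (2*n+1) (i:ℕ)) * c ^ (-((i:ℕ):ℤ)))
        * (Smat (2*n+1) (fv n c) (gv n)).det from by rw [Finset.prod_mul_distrib]; ring]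
  have hterm : ∀ i : Fin ((2*n+1)+(2*n+1)), c ^ (bz n (2*n+1) (i:ℕ)) * c ^ (-((i:ℕ):ℤ))
      = if (i:ℕ) < 2*n+1 then c^((n:ℤ)) else c^(-(n:ℤ)) := by
    intro i
    unfold bz
    by_cases hi : (i:ℕ) < 2*n+1
    · rw [if_pos hi, if_pos hi, ← zpow_add₀ hc0]
      congr 1
      omega
    · rw [if_neg hi, if_neg hi, ← zpow_add₀ hc0]
      congr 1
      have := i.isLt
      push_cast
      omega
  rw [Finset.prod_congr rfl (fun i _ => hterm i)]
  rw [Fin.prod_univ_add (f := fun i : Fin ((2*n+1)+(2*n+1)) =>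
    if (i:ℕ) < 2*n+1 then c^((n:ℤ)) else c^(-(n:ℤ)))]
  have hleft : ∀ i : Fin (2*n+1),
      (if ((Fin.castAdd (2*n+1) i : Fin ((2*n+1)+(2*n+1))):ℕ) < 2*n+1
        then c^((n:ℤ)) else c^(-(n:ℤ))) = c^((n:ℤ)) := fun i => by
    rw [if_pos (by rw [Fin.coe_castAdd]; exact i.isLt)]
  have hright : ∀ i : Fin (2*n+1),
      (if ((Fin.natAdd (2*n+1) i : Fin ((2*n+1)+(2*n+1))):ℕ) < 2*n+1
        then c^((n:ℤ)) else c^(-(n:ℤ))) = c^(-(n:ℤ)) := fun i => by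
    rw [if_neg (by rw [Fin.coe_natAdd]; omega)]
  rw [Finset.prod_congr rfl (fun i _ => hleft i), Finset.prod_congr rfl (fun i _ => hright i)]
  rw [Finset.prod_const, Finset.prod_const, Finset.card_univ, Fintype.card_fin,
    ← mul_pow, ← zpow_add₀ hc0, add_neg_cancel, zpow_zero, one_pow, one_mul]

-- ==== section join ====

lemma eval_substMat {K : Type*} [CommRing K] (v : Fin 2 → K) (A : Matrix (Fin 2) (Fin 2) K)
    (P : MvPolynomial (Fin 2) K) :
    MvPolynomial.eval v (substMat A P)
      = MvPolynomial.eval (fun s => A s 0 * v 0 + A s 1 * v 1) P := by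
  induction P using MvPolynomial.induction_on with
  | C a => rw [substMat_C]; simp
  | add p q hp hq => rw [substMat_add, map_add, map_add, hp, hq]
  | mul_X p s hp => rw [substMat_mul, map_mul, hp, substMat_X]; simp

lemma eval_toForm_gen {K : Type*} [CommRing K] (v : Fin 2 → K) (dd : ℕ) (h : ℕ → K) :
    MvPolynomial.eval v (toForm dd h) = ∑ i ∈ Finset.range (dd+1), h i * v 0 ^ i * v 1 ^ (dd-i) := by
  rw [toForm, map_sum]
  refine Finset.sum_congr rfl fun i _ => ?_
  simp

lemma eval_form_f (n : ℕ) (hn : 1 ≤ n) (c : ℚ) (v : Fin 2 → ℚ) :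
    MvPolynomial.eval v (toForm (2*n+1) (fv n c))
      = v 0 ^ (2*n+1) - c^(n+1) * v 1 ^ (2*n+1) := by
  rw [eval_toForm_gen]
  have hterm : ∀ i ∈ Finset.range (2*n+1+1), fv n c i * v 0 ^ i * v 1 ^ (2*n+1-i)
      = (if i = 2*n+1 then v 0^(2*n+1) else 0)
        + (if i = 0 then -(c^(n+1) * v 1^(2*n+1)) else 0) := by
    intro i hi
    unfold fv
    by_cases h1 : i = 2*n+1
    · subst h1
      rw [if_pos rfl, if_pos rfl, if_neg (by omega)]
      simp
    · rw [if_neg h1, if_neg h1]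
      by_cases h0 : i = 0
      · subst h0
        rw [if_pos rfl, if_pos rfl]
        simp only [pow_zero, Nat.sub_zero, mul_one, one_mul]
        ring
      · rw [if_neg h0, if_neg h0]
        simp
  rw [Finset.sum_congr rfl hterm, Finset.sum_add_distrib,
    Finset.sum_ite_eq' (Finset.range (2*n+1+1)) (2*n+1),
    Finset.sum_ite_eq' (Finset.range (2*n+1+1)) 0]
  rw [if_pos (Finset.mem_range.2 (by omega)), if_pos (Finset.mem_range.2 (by omega))]
  ring

lemma comb_F {K : Type*} [CommRing K] (d : ℕ) (f g : ℕ → K) (A : Matrix (Fin 2) (Fin 2) K)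
    (i : ℕ) :
    A 0 0 * FA d f g A i + A 0 1 * GA d f g A i
      = A.det * coeffVec d (substMat A (toForm d f)) i := by
  unfold FA GA
  have hpoly : C (A 0 0) * (C (A 1 1) * substMat A (toForm d f)
        - C (A 0 1) * substMat A (toForm d g))
      + C (A 0 1) * (-(C (A 1 0)) * substMat A (toForm d f)
        + C (A 0 0) * substMat A (toForm d g))
      = C A.det * substMat A (toForm d f) := by
    rw [Matrix.det_fin_two]
    push_cast [map_mul, map_sub]
    ring
  have hc := congrArg (fun P => coeffVec d P i) hpoly
  rw [coeffVec_add, coeffVec_C_mul, coeffVec_C_mul, coeffVec_C_mul] at hc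
  exact hc

lemma no_orbit (n : ℕ) (hn : 1 ≤ n) (c : ℤ) (hc0 : c ≠ 0) (hc1 : c ≠ 1) (hcm1 : c ≠ -1) :
    ¬ ∃ (u : ℤˣ) (M : Matrix (Fin 2) (Fin 2) ℤ), IsUnit M.det ∧
      (∀ i, fv' n (c:ℚ) i
        = ((u : ℤ) : ℚ) * FA (2*n+1) (fv n (c:ℚ)) (gv n) (M.map (Int.cast : ℤ → ℚ)) i) ∧
      (∀ i, gv n i
        = ((u : ℤ) : ℚ) * GA (2*n+1) (fv n (c:ℚ)) (gv n) (M.map (Int.cast : ℤ → ℚ)) i) := by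
  rintro ⟨u, M, hMdet, hF, hG⟩
  set Mq := M.map (Int.cast : ℤ → ℚ) with hMq
  have hmap : ∀ s t : Fin 2, Mq s t = ((M s t : ℤ) : ℚ) := fun s t => rfl
  have hdet : Mq.det = ((M.det : ℤ) : ℚ) := ((Int.castRingHom ℚ).map_det M).symm
  have hSFhom := substMat_toForm_isHomogeneous Mq (2*n+1) (fv n (c:ℚ))
  have hcomb : ∀ i, Mq 0 0 * fv' n (c:ℚ) i + Mq 0 1 * gv n i
      = ((u:ℤ):ℚ) * (Mq.det * coeffVec (2*n+1) (substMat Mq (toForm (2*n+1) (fv n (c:ℚ)))) i) := by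
    intro i
    rw [hF i, hG i, show Mq 0 0 * (((u:ℤ):ℚ) * FA (2*n+1) (fv n (c:ℚ)) (gv n) Mq i)
        + Mq 0 1 * (((u:ℤ):ℚ) * GA (2*n+1) (fv n (c:ℚ)) (gv n) Mq i)
      = ((u:ℤ):ℚ) * (Mq 0 0 * FA (2*n+1) (fv n (c:ℚ)) (gv n) Mq i
          + Mq 0 1 * GA (2*n+1) (fv n (c:ℚ)) (gv n) Mq i) from by ring, comb_F]
  -- coefficient at X^(2n+1)
  have htop : coeffVec (2*n+1) (substMat Mq (toForm (2*n+1) (fv n (c:ℚ)))) (2*n+1)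
      = Mq 0 0 ^ (2*n+1) - (c:ℚ)^(n+1) * Mq 1 0 ^ (2*n+1) := by
    rw [coeffVec_top hSFhom, eval_substMat, eval_form_f n hn]
    simp
  have hbot : coeffVec (2*n+1) (substMat Mq (toForm (2*n+1) (fv n (c:ℚ)))) 0
      = Mq 0 1 ^ (2*n+1) - (c:ℚ)^(n+1) * Mq 1 1 ^ (2*n+1) := by
    rw [coeffVec_bot hSFhom, eval_substMat, eval_form_f n hn]
    simp
  have hEQ1 := hcomb (2*n+1)
  rw [htop, show fv' n (c:ℚ) (2*n+1) = (c:ℚ)^n from by unfold fv'; rw [if_pos rfl],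
    show gv n (2*n+1) = 0 from by unfold gv; rw [if_neg (by omega)], mul_zero, add_zero] at hEQ1
  have hEQ2 := hcomb 0
  rw [hbot, show fv' n (c:ℚ) 0 = -1 from by unfold fv'; rw [if_neg (by omega), if_pos rfl],
    show gv n 0 = 0 from by unfold gv; rw [if_neg (by omega)], mul_zero, add_zero] at hEQ2
  -- descend to ℤ
  have hEQ1z : M 0 0 * c^n
      = (u:ℤ) * (M.det * ((M 0 0)^(2*n+1) - c^(n+1) * (M 1 0)^(2*n+1))) := by
    have := hEQ1
    rw [hmap, hmap, hdet] at this
    exact_mod_cast this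
  have hEQ2z : -(M 0 0)
      = (u:ℤ) * (M.det * ((M 0 1)^(2*n+1) - c^(n+1) * (M 1 1)^(2*n+1))) := by
    have h2 := hEQ2
    rw [hmap, hmap, hmap, hdet, show ((M 0 0 : ℤ):ℚ) * (-1:ℚ) = -((M 0 0 : ℤ):ℚ) from by ring]
      at h2
    exact_mod_cast h2
  obtain ⟨p, hp, hpc⟩ := Int.exists_prime_and_dvd (n := c) (by
    intro h
    rcases Int.natAbs_eq_iff.mp h with h' | h' <;> simp at h' <;> omega)
  have hpunit : ¬ (p ∣ (u:ℤ) * M.det) := by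
    intro hdvd
    exact hp.not_unit (isUnit_of_dvd_unit hdvd (u.isUnit.mul hMdet))
  have hdvd00 : p ∣ M 0 0 := by
    have h1 : (u:ℤ) * M.det * (M 0 0)^(2*n+1)
        = M 0 0 * c^n + (u:ℤ) * M.det * (c^(n+1) * (M 1 0)^(2*n+1)) := by
      linear_combination -hEQ1z
    have hpd : p ∣ (u:ℤ) * M.det * (M 0 0)^(2*n+1) := by
      rw [h1]
      exact dvd_add (Dvd.dvd.mul_left (hpc.trans (dvd_pow_self c (by omega))) _)
        (Dvd.dvd.mul_left (Dvd.dvd.mul_right (hpc.trans (dvd_pow_self c (by omega))) _) _)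
    rcases hp.dvd_mul.mp hpd with h | h
    · exact absurd h hpunit
    · exact hp.dvd_of_dvd_pow h
  have hdvd01 : p ∣ M 0 1 := by
    have h1 : (u:ℤ) * M.det * (M 0 1)^(2*n+1)
        = -(M 0 0) + (u:ℤ) * M.det * (c^(n+1) * (M 1 1)^(2*n+1)) := by
      linear_combination -hEQ2z
    have hpd : p ∣ (u:ℤ) * M.det * (M 0 1)^(2*n+1) := by
      rw [h1]
      exact dvd_add (Dvd.dvd.neg_right hdvd00)
        (Dvd.dvd.mul_left (Dvd.dvd.mul_right (hpc.trans (dvd_pow_self c (by omega))) _) _)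
    rcases hp.dvd_mul.mp hpd with h | h
    · exact absurd h hpunit
    · exact hp.dvd_of_dvd_pow h
  have hdvddet : p ∣ M.det := by
    rw [Matrix.det_fin_two]
    exact dvd_sub (Dvd.dvd.mul_right hdvd00 _) (Dvd.dvd.mul_right hdvd01 _)
  exact hp.not_unit (isUnit_of_dvd_unit hdvddet hMdet)

-- ==== section join ====

def fz (n : ℕ) (c : ℤ) : ℕ → ℤ := fun i => if i = 2*n+1 then 1 else if i = 0 then -c^(n+1) else 0
def gz (n : ℕ) : ℕ → ℤ := fun i => if i = n then 1 else 0
def fz' (n : ℕ) (c : ℤ) : ℕ → ℤ := fun i => if i = 2*n+1 then c^n else if i = 0 then -1 else 0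

lemma cast_f (n : ℕ) (c : ℤ) (i : ℕ) : ((fz n c i : ℤ) : ℚ) = fv n (c:ℚ) i := by
  unfold fz fv
  split_ifs <;> push_cast <;> ring

lemma cast_g (n : ℕ) (i : ℕ) : ((gz n i : ℤ) : ℚ) = gv n i := by
  unfold gz gv
  split_ifs <;> push_cast <;> ring

lemma cast_f' (n : ℕ) (c : ℤ) (i : ℕ) : ((fz' n c i : ℤ) : ℚ) = fv' n (c:ℚ) i := by
  unfold fz' fv'
  split_ifs <;> push_cast <;> ring

lemma cast_sylRes (n : ℕ) (c : ℤ) :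
    ((sylRes (2*n+1) (2*n+1) (fz n c) (gz n) : ℤ) : ℚ)
      = sylRes (2*n+1) (2*n+1) (fv n (c:ℚ)) (gv n) := by
  rw [sylRes_eq_det, sylRes_eq_det, show (((Smat (2*n+1) (fz n c) (gz n)).det : ℤ) : ℚ)
    = ((Smat (2*n+1) (fz n c) (gz n)).map (Int.cast : ℤ → ℚ)).det from
      (Int.castRingHom ℚ).map_det _]
  congr 1
  ext i j
  rw [Matrix.map_apply, Smat_apply, Smat_apply]
  unfold eS
  split_ifs <;> first
    | exact cast_f n c _
    | exact cast_g n _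
    | simp

lemma FA_one (n : ℕ) (c : ℚ) (i : ℕ) : FA (2*n+1) (fv n c) (gv n) 1 i = fv n c i := by
  unfold FA
  rw [Matrix.one_apply_eq, Matrix.one_apply_ne (by decide : (0 : Fin 2) ≠ 1), map_one, one_mul,
    map_zero, zero_mul, sub_zero, substMat_one, coeffVec_toForm]
  by_cases h : i ≤ 2*n+1
  · rw [if_pos h]
  · rw [if_neg h]
    unfold fv
    rw [if_neg (by omega), if_neg (by omega)]

lemma GA_one (n : ℕ) (c : ℚ) (i : ℕ) : GA (2*n+1) (fv n c) (gv n) 1 i = gv n i := by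
  unfold GA
  rw [Matrix.one_apply_eq, Matrix.one_apply_ne (by decide : (1 : Fin 2) ≠ 0), map_one, one_mul,
    map_zero, neg_zero, zero_mul, zero_add, substMat_one, coeffVec_toForm]
  by_cases h : i ≤ 2*n+1
  · rw [if_pos h]
  · rw [if_neg h]
    unfold gv
    rw [if_neg (by omega)]

lemma mul_den (q : ℚ) : q * (q.den : ℚ) = (q.num : ℚ) := by
  have hden : ((q.den : ℚ)) ≠ 0 := by exact_mod_cast q.den_nz
  have h := (div_eq_iff hden).1 (Rat.num_div_den q)
  linarith [h]

lemma toForm_g (n : ℕ) : toForm (2*n+1) (gv n) = X (0:Fin 2) ^ n * X 1 ^ (n+1) := by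
  rw [toForm, Finset.sum_eq_single n]
  · rw [show gv n n = 1 from by unfold gv; rw [if_pos rfl], map_one, one_mul,
      show 2*n+1-n = n+1 from by omega]
  · intro b hb hbn
    rw [show gv n b = 0 from by unfold gv; rw [if_neg hbn], map_zero, zero_mul, zero_mul]
  · intro h
    exact absurd (Finset.mem_range.2 (by omega)) h

lemma content_pow' (p : Polynomial ℤ) (k : ℕ) : (p^k).content = p.content ^ k := by
  induction k with
  | zero => simp [Polynomial.content_one]
  | succ k ih => rw [pow_succ, pow_succ, Polynomial.content_mul, ih]

lemma key_integral (n : ℕ) (f : ℕ → ℚ) (l : ℚ) (A : Matrix (Fin 2) (Fin 2) ℚ) (hl : l ≠ 0)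
    (hA : A.det ≠ 0)
    (hFint : ∀ i, ∃ a : ℤ, (a:ℚ) = l * FA (2*n+1) f (gv n) A i)
    (hGint : ∀ i, ∃ b : ℤ, (b:ℚ) = l * GA (2*n+1) f (gv n) A i) :
    ∃ z : ℤ, (z:ℚ) = l^2 * A.det^(2*n+2) := by
  classical
  set SF := substMat A (toForm (2*n+1) f) with hSFdef
  set SG := substMat A (toForm (2*n+1) (gv n)) with hSGdef
  set H1 : MvPolynomial (Fin 2) ℚ := C l * (C (A 1 1) * SF - C (A 0 1) * SG) with hH1def
  set H2 : MvPolynomial (Fin 2) ℚ := C l * (-(C (A 1 0)) * SF + C (A 0 0) * SG) with hH2def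
  have hSFhom : SF.IsHomogeneous (2*n+1) := substMat_toForm_isHomogeneous A (2*n+1) f
  have hSGhom : SG.IsHomogeneous (2*n+1) := substMat_toForm_isHomogeneous A (2*n+1) (gv n)
  have hCmul : ∀ (a : ℚ) (P : MvPolynomial (Fin 2) ℚ), P.IsHomogeneous (2*n+1) →
      (C a * P).IsHomogeneous (2*n+1) := by
    intro a P hP
    simpa using (isHomogeneous_C (Fin 2) a).mul hP
  have hH1hom : H1.IsHomogeneous (2*n+1) :=
    hCmul l _ ((hCmul (A 1 1) _ hSFhom).sub (hCmul (A 0 1) _ hSGhom))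
  have hH2hom : H2.IsHomogeneous (2*n+1) := by
    apply hCmul l
    have h1 : (-(C (A 1 0)) * SF).IsHomogeneous (2*n+1) := by
      have := hCmul (-(A 1 0)) _ hSFhom
      rwa [map_neg] at this
    exact h1.add (hCmul (A 0 0) _ hSGhom)
  have hrel : C (A 1 0) * H1 + C (A 1 1) * H2 = C (l * A.det) * SG := by
    rw [hH1def, hH2def, Matrix.det_fin_two]
    push_cast [map_mul, map_sub]
    ring
  have hSGprod : SG = (C (A 0 0) * X 0 + C (A 0 1) * X 1)^n
      * (C (A 1 0) * X 0 + C (A 1 1) * X 1)^(n+1) := by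
    rw [hSGdef, toForm_g, substMat_mul, substMat_pow, substMat_pow, substMat_X, substMat_X]
  -- dehomogenization
  set φh : MvPolynomial (Fin 2) ℚ →+* Polynomial ℚ :=
    (MvPolynomial.eval₂Hom (Polynomial.C : ℚ →+* Polynomial ℚ) ![Polynomial.X, 1]) with hφdef
  have hφC : ∀ a : ℚ, φh (C a) = Polynomial.C a := fun a => by
    rw [hφdef]; simp
  have hφX0 : φh (X 0) = Polynomial.X := by rw [hφdef]; simp
  have hφX1 : φh (X 1) = 1 := by rw [hφdef]; simp
  have hφtoForm : ∀ (dd : ℕ) (h : ℕ → ℚ), φh (toForm dd h)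
      = ∑ i ∈ Finset.range (dd+1), Polynomial.C (h i) * Polynomial.X ^ i := by
    intro dd h
    rw [toForm, map_sum]
    refine Finset.sum_congr rfl fun i _ => ?_
    rw [map_mul, map_mul, map_pow, map_pow, hφC, hφX0, hφX1, one_pow, mul_one]
  have hφcoeff : ∀ (P : MvPolynomial (Fin 2) ℚ), P.IsHomogeneous (2*n+1) → ∀ j,
      (φh P).coeff j = if j ≤ 2*n+1 then coeffVec (2*n+1) P j else 0 := by
    intro P hP j
    conv_lhs => rw [← toForm_coeffVec hP]
    rw [hφtoForm, Polynomial.finset_sum_coeff]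
    rw [Finset.sum_congr rfl (fun i (_ : i ∈ Finset.range (2*n+1+1)) => by
      rw [Polynomial.coeff_C_mul, Polynomial.coeff_X_pow])]
    by_cases hj : j ≤ 2*n+1
    · rw [if_pos hj, Finset.sum_eq_single j]
      · rw [if_pos rfl, mul_one]
      · intro b hb hbj
        rw [if_neg (fun hc => hbj hc.symm), mul_zero]
      · intro hj'
        exact absurd (Finset.mem_range.2 (by omega)) hj'
    · rw [if_neg hj, Finset.sum_eq_zero]
      intro b hb
      simp only [Finset.mem_range] at hb
      rw [if_neg (by omega), mul_zero]
  -- integrality of the dehomogenized H's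
  have hint : ∀ (P : MvPolynomial (Fin 2) ℚ), P.IsHomogeneous (2*n+1) →
      (∀ j, ∃ a : ℤ, (a : ℚ) = coeffVec (2*n+1) P j) →
      ∃ Pz : Polynomial ℤ, Pz.map (Int.castRingHom ℚ) = φh P := by
    intro P hP hvals
    rw [← Polynomial.mem_lifts]
    rw [Polynomial.lifts_iff_coeff_lifts]
    intro j
    rw [hφcoeff P hP j]
    by_cases hj : j ≤ 2*n+1
    · rw [if_pos hj]
      obtain ⟨a, ha⟩ := hvals j
      exact ⟨a, by simpa using ha⟩
    · rw [if_neg hj]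
      exact ⟨0, by simp⟩
  obtain ⟨P1, hP1⟩ := hint H1 hH1hom (fun j => by
    obtain ⟨a, ha⟩ := hFint j
    exact ⟨a, by rw [ha]; rw [hH1def]; rw [coeffVec_C_mul]; rfl⟩)
  obtain ⟨P2, hP2⟩ := hint H2 hH2hom (fun j => by
    obtain ⟨b, hb⟩ := hGint j
    exact ⟨b, by rw [hb]; rw [hH2def]; rw [coeffVec_C_mul]; rfl⟩)
  clear_value SF SG H1 H2
  -- clear denominators of A entries
  set m : ℤ := ((A 0 0).den : ℤ) * ((A 0 1).den : ℤ) * ((A 1 0).den : ℤ) * ((A 1 1).den : ℤ)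
    with hmdef
  have hm0 : (m:ℚ) ≠ 0 := by
    push_cast
    refine ne_of_gt ?_
    have h1 := (A 0 0).pos
    have h2 := (A 0 1).pos
    have h3 := (A 1 0).pos
    have h4 := (A 1 1).pos
    positivity
  set a₁ : ℤ := (A 0 0).num * (((A 0 1).den : ℤ) * ((A 1 0).den : ℤ) * ((A 1 1).den : ℤ))
    with ha₁def
  set b₁ : ℤ := (A 0 1).num * (((A 0 0).den : ℤ) * ((A 1 0).den : ℤ) * ((A 1 1).den : ℤ))
    with hb₁def
  set g₁ : ℤ := (A 1 0).num * (((A 0 0).den : ℤ) * ((A 0 1).den : ℤ) * ((A 1 1).den : ℤ))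
    with hg₁def
  set d₁ : ℤ := (A 1 1).num * (((A 0 0).den : ℤ) * ((A 0 1).den : ℤ) * ((A 1 0).den : ℤ))
    with hd₁def
  have ha₁ : ((a₁ : ℤ) : ℚ) = A 0 0 * (m:ℚ) := by
    rw [ha₁def, hmdef]
    push_cast
    rw [show (A 0 0 : ℚ) * ((((A 0 0).den):ℚ) * ((A 0 1).den) * ((A 1 0).den) * ((A 1 1).den))
      = (A 0 0 * ((A 0 0).den:ℚ)) * (((A 0 1).den:ℚ) * ((A 1 0).den) * ((A 1 1).den)) from by
        ring, mul_den]
  have hb₁ : ((b₁ : ℤ) : ℚ) = A 0 1 * (m:ℚ) := by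
    rw [hb₁def, hmdef]
    push_cast
    rw [show (A 0 1 : ℚ) * ((((A 0 0).den):ℚ) * ((A 0 1).den) * ((A 1 0).den) * ((A 1 1).den))
      = (A 0 1 * ((A 0 1).den:ℚ)) * (((A 0 0).den:ℚ) * ((A 1 0).den) * ((A 1 1).den)) from by
        ring, mul_den]
  have hg₁ : ((g₁ : ℤ) : ℚ) = A 1 0 * (m:ℚ) := by
    rw [hg₁def, hmdef]
    push_cast
    rw [show (A 1 0 : ℚ) * ((((A 0 0).den):ℚ) * ((A 0 1).den) * ((A 1 0).den) * ((A 1 1).den))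
      = (A 1 0 * ((A 1 0).den:ℚ)) * (((A 0 0).den:ℚ) * ((A 0 1).den) * ((A 1 1).den)) from by
        ring, mul_den]
  have hd₁ : ((d₁ : ℤ) : ℚ) = A 1 1 * (m:ℚ) := by
    rw [hd₁def, hmdef]
    push_cast
    rw [show (A 1 1 : ℚ) * ((((A 0 0).den):ℚ) * ((A 0 1).den) * ((A 1 0).den) * ((A 1 1).den))
      = (A 1 1 * ((A 1 1).den:ℚ)) * (((A 0 0).den:ℚ) * ((A 0 1).den) * ((A 1 0).den)) from by
        ring, mul_den]
  set ρ : ℚ := l * A.det / (m:ℚ)^(2*n) with hρdef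
  set x : ℤ := ρ.num with hxdef
  set y : ℤ := (ρ.den : ℤ) with hydef
  have hy0 : (y:ℚ) ≠ 0 := by
    rw [hydef]
    exact_mod_cast ρ.den_nz
  have hyz : y ≠ 0 := by exact_mod_cast hy0
  have hxy : (y:ℚ) * (l * A.det) = (x:ℚ) * (m:ℚ)^(2*n) := by
    have h : (x:ℚ) / (y:ℚ) = ρ := by
      rw [hxdef, hydef]
      exact_mod_cast Rat.num_div_den ρ
    rw [hρdef] at h
    rw [div_eq_div_iff hy0 (pow_ne_zero (2*n) hm0)] at h
    linarith [h]
  -- the rational polynomial identity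
  have hφrel : Polynomial.C (A 1 0) * (φh H1) + Polynomial.C (A 1 1) * (φh H2)
      = Polynomial.C (l * A.det) * ((Polynomial.C (A 0 0) * Polynomial.X
          + Polynomial.C (A 0 1))^n * (Polynomial.C (A 1 0) * Polynomial.X
          + Polynomial.C (A 1 1))^(n+1)) := by
    have hthis := congrArg φh hrel
    simp only [map_add, map_mul, map_pow, hφC, hφX0, hφX1] at hthis
    rw [hSGprod] at hthis
    simp only [map_add, map_mul, map_pow, hφC, hφX0, hφX1] at hthis
    rw [hthis]
    simp only [map_mul]
    ring
  have hQrel : Polynomial.C ((y:ℚ)) * (Polynomial.C ((g₁:ℤ):ℚ) * (φh H1)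
        + Polynomial.C ((d₁:ℤ):ℚ) * (φh H2))
      = Polynomial.C ((x:ℚ)) * ((Polynomial.C ((a₁:ℤ):ℚ) * Polynomial.X
          + Polynomial.C ((b₁:ℤ):ℚ))^n * (Polynomial.C ((g₁:ℤ):ℚ) * Polynomial.X
          + Polynomial.C ((d₁:ℤ):ℚ))^(n+1)) := by
    rw [ha₁, hb₁, hg₁, hd₁]
    have hexp1 : Polynomial.C ((y:ℚ)) * (Polynomial.C (A 1 0 * (m:ℚ)) * (φh H1)
          + Polynomial.C (A 1 1 * (m:ℚ)) * (φh H2))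
        = Polynomial.C ((y:ℚ) * (m:ℚ)) * (Polynomial.C (A 1 0) * (φh H1)
            + Polynomial.C (A 1 1) * (φh H2)) := by
      simp only [map_mul]
      ring
    rw [hexp1, hφrel]
    have hexp2 : ∀ u v : ℚ, Polynomial.C (u * (m:ℚ)) * Polynomial.X + Polynomial.C (v * (m:ℚ))
        = Polynomial.C ((m:ℚ)) * (Polynomial.C u * Polynomial.X + Polynomial.C v) := by
      intro u v
      simp only [map_mul]
      ring
    rw [hexp2, hexp2, mul_pow, mul_pow, ← Polynomial.C_pow, ← Polynomial.C_pow]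
    have hsc : (y:ℚ) * (m:ℚ) * (l * A.det) = (x:ℚ) * ((m:ℚ)^n * (m:ℚ)^(n+1)) := by
      rw [show ((m:ℚ)^n * (m:ℚ)^(n+1)) = (m:ℚ)^(2*n) * (m:ℚ) from by
        rw [← pow_add, ← pow_succ]; congr 1; omega]
      linear_combination (m:ℚ) * hxy
    calc Polynomial.C ((y:ℚ) * (m:ℚ)) * (Polynomial.C (l * A.det)
          * ((Polynomial.C (A 0 0) * Polynomial.X + Polynomial.C (A 0 1))^n
            * (Polynomial.C (A 1 0) * Polynomial.X + Polynomial.C (A 1 1))^(n+1)))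
        = Polynomial.C ((y:ℚ) * (m:ℚ) * (l * A.det))
          * ((Polynomial.C (A 0 0) * Polynomial.X + Polynomial.C (A 0 1))^n
            * (Polynomial.C (A 1 0) * Polynomial.X + Polynomial.C (A 1 1))^(n+1)) := by
          simp only [map_mul]
          ring
      _ = Polynomial.C ((x:ℚ) * ((m:ℚ)^n * (m:ℚ)^(n+1)))
          * ((Polynomial.C (A 0 0) * Polynomial.X + Polynomial.C (A 0 1))^n
            * (Polynomial.C (A 1 0) * Polynomial.X + Polynomial.C (A 1 1))^(n+1)) := by
          rw [hsc]
      _ = _ := by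
          simp only [map_mul, map_pow]
          ring
  -- integer polynomial identity
  set Pa : Polynomial ℤ := Polynomial.C a₁ * Polynomial.X + Polynomial.C b₁ with hPadef
  set Pb : Polynomial ℤ := Polynomial.C g₁ * Polynomial.X + Polynomial.C d₁ with hPbdef
  have hmapLHS : (Polynomial.C y * (Polynomial.C g₁ * P1 + Polynomial.C d₁ * P2)).map
        (Int.castRingHom ℚ)
      = Polynomial.C ((y:ℚ)) * (Polynomial.C ((g₁:ℤ):ℚ) * (φh H1)
          + Polynomial.C ((d₁:ℤ):ℚ) * (φh H2)) := by
    simp only [Polynomial.map_mul, Polynomial.map_add, Polynomial.map_C, hP1, hP2]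
    norm_num
  have hmapRHS : (Polynomial.C x * (Pa^n * Pb^(n+1))).map (Int.castRingHom ℚ)
      = Polynomial.C ((x:ℚ)) * ((Polynomial.C ((a₁:ℤ):ℚ) * Polynomial.X
          + Polynomial.C ((b₁:ℤ):ℚ))^n * (Polynomial.C ((g₁:ℤ):ℚ) * Polynomial.X
          + Polynomial.C ((d₁:ℤ):ℚ))^(n+1)) := by
    simp only [Polynomial.map_mul, Polynomial.map_add, Polynomial.map_pow, Polynomial.map_C,
      Polynomial.map_X, hPadef, hPbdef]
    norm_num
  have hZrel : Polynomial.C y * (Polynomial.C g₁ * P1 + Polynomial.C d₁ * P2)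
      = Polynomial.C x * (Pa^n * Pb^(n+1)) := by
    apply Polynomial.map_injective (Int.castRingHom ℚ) Int.cast_injective
    rw [hmapLHS, hmapRHS, hQrel]
  -- content computations
  have hdvd_coeffs : ∀ j, (y * gcd g₁ d₁ : ℤ) ∣ (Polynomial.C x * (Pa^n * Pb^(n+1))).coeff j := by
    intro j
    rw [← hZrel, Polynomial.coeff_C_mul, Polynomial.coeff_add, Polynomial.coeff_C_mul,
      Polynomial.coeff_C_mul]
    exact mul_dvd_mul_left y (dvd_add ((gcd_dvd_left g₁ d₁).mul_right _)
      ((gcd_dvd_right g₁ d₁).mul_right _))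
  have hdvd_content : (y * gcd g₁ d₁ : ℤ) ∣ (Polynomial.C x * (Pa^n * Pb^(n+1))).content :=
    Polynomial.dvd_content_iff_C_dvd.2 ((Polynomial.C_dvd_iff_dvd_coeff _ _).2 hdvd_coeffs)
  have hcontent_val : (Polynomial.C x * (Pa^n * Pb^(n+1))).content
      = normalize x * (Pa.content^n * Pb.content^(n+1)) := by
    rw [Polynomial.content_C_mul, Polynomial.content_mul, content_pow', content_pow']
  have hPbcoeff1 : Pb.coeff 1 = g₁ := by
    rw [hPbdef]
    rw [Polynomial.coeff_add, Polynomial.coeff_C_mul, Polynomial.coeff_X_one, mul_one,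
      Polynomial.coeff_C, if_neg one_ne_zero, add_zero]
  have hPbcoeff0 : Pb.coeff 0 = d₁ := by
    rw [hPbdef]
    rw [Polynomial.coeff_add, Polynomial.coeff_C_mul, Polynomial.coeff_X_zero, mul_zero,
      Polynomial.coeff_C_zero, zero_add]
  have hPacoeff1 : Pa.coeff 1 = a₁ := by
    rw [hPadef]
    rw [Polynomial.coeff_add, Polynomial.coeff_C_mul, Polynomial.coeff_X_one, mul_one,
      Polynomial.coeff_C, if_neg one_ne_zero, add_zero]
  have hPacoeff0 : Pa.coeff 0 = b₁ := by
    rw [hPadef]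
    rw [Polynomial.coeff_add, Polynomial.coeff_C_mul, Polynomial.coeff_X_zero, mul_zero,
      Polynomial.coeff_C_zero, zero_add]
  have hcb_g : Pb.content ∣ g₁ := hPbcoeff1 ▸ Polynomial.content_dvd_coeff 1
  have hcb_d : Pb.content ∣ d₁ := hPbcoeff0 ▸ Polynomial.content_dvd_coeff 0
  have hca_a : Pa.content ∣ a₁ := hPacoeff1 ▸ Polynomial.content_dvd_coeff 1
  have hca_b : Pa.content ∣ b₁ := hPacoeff0 ▸ Polynomial.content_dvd_coeff 0
  have hPb0 : Pb ≠ 0 := by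
    intro h0
    have hg0 : g₁ = 0 := by rw [← hPbcoeff1, h0, Polynomial.coeff_zero]
    have hd0 : d₁ = 0 := by rw [← hPbcoeff0, h0, Polynomial.coeff_zero]
    have hγ : A 1 0 = 0 := by
      have := hg₁
      rw [hg0] at this
      push_cast at this
      rcases mul_eq_zero.mp this.symm with h | h
      · exact h
      · exact absurd h hm0
    have hδ : A 1 1 = 0 := by
      have := hd₁
      rw [hd0] at this
      push_cast at this
      rcases mul_eq_zero.mp this.symm with h | h
      · exact h
      · exact absurd h hm0
    apply hA
    rw [Matrix.det_fin_two, hγ, hδ]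
    ring
  have hcb0 : Pb.content ≠ 0 := fun h => hPb0 (Polynomial.content_eq_zero_iff.mp h)
  have hdvd2 : (y * Pb.content : ℤ) ∣ x * (Pa.content^n * Pb.content^n) * Pb.content := by
    have h1 : (y * Pb.content : ℤ) ∣ y * gcd g₁ d₁ :=
      mul_dvd_mul_left y (dvd_gcd hcb_g hcb_d)
    refine h1.trans (hdvd_content.trans ?_)
    rw [hcontent_val]
    have hnorm : normalize x ∣ x := normalize_dvd_iff.2 dvd_rfl
    calc normalize x * (Pa.content^n * Pb.content^(n+1))
        ∣ x * (Pa.content^n * Pb.content^(n+1)) := mul_dvd_mul_right hnorm _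
      _ = x * (Pa.content^n * Pb.content^n) * Pb.content := by ring
  have hy_dvd : y ∣ x * (Pa.content^n * Pb.content^n) :=
    (mul_dvd_mul_iff_right hcb0).1 hdvd2
  have hcop : IsCoprime y x := by
    rw [Int.isCoprime_iff_gcd_eq_one]
    have hred := ρ.reduced
    rw [hxdef, hydef]
    unfold Int.gcd
    simpa [Nat.coprime_comm] using hred
  have hy_dvd2 : y ∣ Pa.content^n * Pb.content^n := hcop.dvd_of_dvd_mul_left hy_dvd
  set e₀ : ℤ := a₁ * d₁ - b₁ * g₁ with he₀def
  have hcacb_e : (Pa.content * Pb.content : ℤ) ∣ e₀ :=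
    dvd_sub (mul_dvd_mul hca_a hcb_d) (mul_dvd_mul hca_b hcb_g)
  have hy_e : y ∣ e₀^n := by
    refine hy_dvd2.trans ?_
    rw [← mul_pow]
    exact pow_dvd_pow_of_dvd hcacb_e n
  obtain ⟨t, ht⟩ := hy_e
  have he₀ : ((e₀:ℤ):ℚ) = (m:ℚ)^2 * A.det := by
    rw [he₀def]
    push_cast [ha₁, hb₁, hg₁, hd₁]
    rw [Matrix.det_fin_two]
    ring
  refine ⟨(x*t)^2, ?_⟩
  have hkey : (((x*t)^2 : ℤ):ℚ) * (y:ℚ)^2 = l^2 * A.det^(2*n+2) * (y:ℚ)^2 := by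
    have htq : ((e₀:ℤ):ℚ)^n = (y:ℚ) * (t:ℚ) := by
      rw [show ((e₀:ℤ):ℚ)^n = (((e₀^n : ℤ)):ℚ) from by push_cast; ring, ht]
      push_cast
      ring
    calc (((x*t)^2 : ℤ):ℚ) * (y:ℚ)^2
        = (x:ℚ)^2 * ((y:ℚ) * (t:ℚ))^2 := by push_cast; ring
      _ = (x:ℚ)^2 * (((e₀:ℤ):ℚ)^n)^2 := by rw [htq]
      _ = (x:ℚ)^2 * (((m:ℚ)^2 * A.det)^n)^2 := by rw [he₀]
      _ = ((x:ℚ) * (m:ℚ)^(2*n))^2 * A.det^(2*n) := by ring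
      _ = ((y:ℚ) * (l * A.det))^2 * A.det^(2*n) := by rw [← hxy]
      _ = l^2 * A.det^(2*n+2) * (y:ℚ)^2 := by ring
  exact mul_right_cancel₀ (pow_ne_zero 2 hy0) hkey

-- ==== section join ====

lemma resIdeal_eq (n : ℕ) (c : ℤ) :
    ResIdeal ℤ (2*n+1) (fv n (c:ℚ)) (gv n)
      = Ideal.span {sylRes (2*n+1) (2*n+1) (fz n c) (gz n)} := by
  apply le_antisymm
  · rw [ResIdeal, Ideal.span_le]
    rintro r' ⟨l, A, hl, hA, hFint, hGint, hr'⟩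
    rw [SetLike.mem_coe, Ideal.mem_span_singleton]
    have hFint' : ∀ i, ∃ a : ℤ, (a:ℚ) = l * FA (2*n+1) (fv n (c:ℚ)) (gv n) A i := fun i => by
      obtain ⟨a, ha⟩ := hFint i
      exact ⟨a, (eq_intCast (algebraMap ℤ ℚ) a).symm.trans ha⟩
    have hGint' : ∀ i, ∃ b : ℤ, (b:ℚ) = l * GA (2*n+1) (fv n (c:ℚ)) (gv n) A i := fun i => by
      obtain ⟨b, hb⟩ := hGint i
      exact ⟨b, (eq_intCast (algebraMap ℤ ℚ) b).symm.trans hb⟩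
    obtain ⟨z, hz⟩ := key_integral n (fv n (c:ℚ)) l A hl hA hFint' hGint'
    have hlaw := law (2*n) (fv n (c:ℚ)) (gv n) l A hA
    have hr'q : ((r' : ℤ):ℚ) = sylRes (2*n+1) (2*n+1)
        (fun i => l * FA (2*n+1) (fv n (c:ℚ)) (gv n) A i)
        (fun i => l * GA (2*n+1) (fv n (c:ℚ)) (gv n) A i) :=
      (eq_intCast (algebraMap ℤ ℚ) r').symm.trans hr'
    have hZ2 : r'^2 = (z^(2*n+1) * sylRes (2*n+1) (2*n+1) (fz n c) (gz n))^2 := by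
      have hq : ((r'^2 : ℤ):ℚ)
          = (((z^(2*n+1) * sylRes (2*n+1) (2*n+1) (fz n c) (gz n))^2 : ℤ):ℚ) := by
        push_cast
        rw [hr'q, hlaw, ← hz, ← cast_sylRes n c]
        push_cast
        ring
      exact_mod_cast hq
    have hfac : (r' - z^(2*n+1) * sylRes (2*n+1) (2*n+1) (fz n c) (gz n))
        * (r' + z^(2*n+1) * sylRes (2*n+1) (2*n+1) (fz n c) (gz n)) = 0 := by
      linear_combination hZ2
    rcases mul_eq_zero.mp hfac with h | h
    · exact ⟨z^(2*n+1), by linear_combination h⟩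
    · exact ⟨-(z^(2*n+1)), by linear_combination h⟩
  · rw [Ideal.span_le, Set.singleton_subset_iff]
    apply Ideal.subset_span
    refine ⟨1, 1, one_ne_zero, by rw [Matrix.det_one]; exact one_ne_zero, ?_, ?_, ?_⟩
    · intro i
      exact ⟨fz n c i, by
        rw [eq_intCast (algebraMap ℤ ℚ), one_mul, FA_one]
        exact cast_f n c i⟩
    · intro i
      exact ⟨gz n i, by
        rw [eq_intCast (algebraMap ℤ ℚ), one_mul, GA_one]
        exact cast_g n i⟩
    · rw [eq_intCast (algebraMap ℤ ℚ),
        show (fun i => (1:ℚ) * FA (2*n+1) (fv n (c:ℚ)) (gv n) 1 i) = fv n (c:ℚ) from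
          funext fun i => by rw [one_mul, FA_one],
        show (fun i => (1:ℚ) * GA (2*n+1) (fv n (c:ℚ)) (gv n) 1 i) = gv n from
          funext fun i => by rw [one_mul, GA_one]]
      exact cast_sylRes n c

end S16


/-- For `n ≥ 1` and `c ∈ ℤ \ {0, ±1}`, with `d = 2n+1`, the models
`[X^(2n+1) − c^(n+1)Y^(2n+1), X^nY^(n+1)]` and `[c^nX^(2n+1) − Y^(2n+1), X^nY^(n+1)]` over `ℤ`
are both `ℤ`-minimal models of the same class: the second is `[F,G]^{(λ,A)}` for
`(λ,A) = (c^{−n−1}, diag(c,1))` and they have equal resultants, but they are not in the same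
orbit under `ℤ^× × GL₂(ℤ)`. -/
theorem statement16 (n : ℕ) (hn : 1 ≤ n) (c : ℤ) (hc0 : c ≠ 0) (hc1 : c ≠ 1) (hcm1 : c ≠ -1)
    (d : ℕ) (hd : d = 2 * n + 1)
    (f g f' g' : ℕ → ℚ)
    (hfdef : f = fun i => if i = 2 * n + 1 then 1 else if i = 0 then -(c : ℚ) ^ (n + 1) else 0)
    (hgdef : g = fun i => if i = n then 1 else 0)
    (hf'def : f' = fun i => if i = 2 * n + 1 then (c : ℚ) ^ n else if i = 0 then -1 else 0)
    (hg'def : g' = g) :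
    -- the second model is the transform of the first by (λ, A) = (c^{-n-1}, diag(c, 1))
    (∀ i, f' i = (c : ℚ) ^ (-((n : ℤ) + 1)) *
        FA d f g (Matrix.of ![![(c : ℚ), 0], ![0, 1]]) i) ∧
    (∀ i, g' i = (c : ℚ) ^ (-((n : ℤ) + 1)) *
        GA d f g (Matrix.of ![![(c : ℚ), 0], ![0, 1]]) i) ∧
    -- the two models have the same resultant
    sylRes d d f g = sylRes d d f' g' ∧
    -- both models are ℤ-minimal models of the class of [F, G]
    (∀ i, ∃ a : ℤ, (a : ℚ) = f i) ∧ (∀ i, ∃ a : ℤ, (a : ℚ) = g i) ∧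
    (∀ i, ∃ a : ℤ, (a : ℚ) = f' i) ∧ (∀ i, ∃ a : ℤ, (a : ℚ) = g' i) ∧
    (∃ r : ℤ, (r : ℚ) = sylRes d d f g ∧ ResIdeal ℤ d f g = Ideal.span {r}) ∧
    (∃ r' : ℤ, (r' : ℚ) = sylRes d d f' g' ∧ ResIdeal ℤ d f g = Ideal.span {r'}) ∧
    -- but they are not in the same (ℤ^× × GL₂(ℤ))-orbit
    ¬ ∃ (u : ℤˣ) (M : Matrix (Fin 2) (Fin 2) ℤ), IsUnit M.det ∧
        (∀ i, f' i = ((u : ℤ) : ℚ) * FA d f g (M.map (Int.cast : ℤ → ℚ)) i) ∧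
        (∀ i, g' i = ((u : ℤ) : ℚ) * GA d f g (M.map (Int.cast : ℤ → ℚ)) i) := by
  subst hd
  subst hfdef
  subst hgdef
  subst hg'def
  subst hf'def
  have hcq : ((c:ℚ)) ≠ 0 := Int.cast_ne_zero.mpr hc0
  refine ⟨S16.bullet1 n hn (c:ℚ) hcq, S16.bullet2 n (c:ℚ) hcq, S16.bullet3 n (c:ℚ) hcq,
    fun i => ⟨S16.fz n c i, S16.cast_f n c i⟩,
    fun i => ⟨S16.gz n i, S16.cast_g n i⟩,
    fun i => ⟨S16.fz' n c i, S16.cast_f' n c i⟩,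
    fun i => ⟨S16.gz n i, S16.cast_g n i⟩,
    ⟨sylRes (2*n+1) (2*n+1) (S16.fz n c) (S16.gz n), S16.cast_sylRes n c,
      S16.resIdeal_eq n c⟩,
    ⟨sylRes (2*n+1) (2*n+1) (S16.fz n c) (S16.gz n),
      (S16.cast_sylRes n c).trans (S16.bullet3 n (c:ℚ) hcq),
      S16.resIdeal_eq n c⟩,
    S16.no_orbit n hn c hc0 hc1 hcm1⟩

end
end

section
/- Let φ(z) = (86z² − 1068z − 338)/(z² + 7z − 338), a degree-2 rational map on P¹ over ℚ. Then the model [F,G] with F = 86X² − 1068XY − 338Y² and G = X² + 7XY − 338Y² is a ℤ-minimal model of [φ], and the first eight points of the forward orbit of 0 under φ are the integers 0, 1, 4, 11, 12, 7, 15, −374; in particular the orbit of 0 contains at least 8 integers. -/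
noncomputable section

/-! ### Auxiliary machinery for the proof -/

open MvPolynomial

section AuxPoly

lemma substMat_toForm {K : Type*} [CommRing K] (A : Matrix (Fin 2) (Fin 2) K) (f : ℕ → K) :
    substMat A (toForm 2 f) =
      C (f 2 * A 0 0 ^ 2 + f 1 * (A 0 0 * A 1 0) + f 0 * A 1 0 ^ 2) * (X 0 ^ 2)
      + C (2 * f 2 * (A 0 0 * A 0 1) + f 1 * (A 0 0 * A 1 1 + A 0 1 * A 1 0)
          + 2 * f 0 * (A 1 0 * A 1 1)) * (X 0 * X 1)
      + C (f 2 * A 0 1 ^ 2 + f 1 * (A 0 1 * A 1 1) + f 0 * A 1 1 ^ 2) * (X 1 ^ 2) := by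
  simp only [toForm, substMat, Finset.sum_range_succ, Finset.sum_range_zero, zero_add,
    eval₂_add, eval₂_mul, eval₂_pow, eval₂_C, eval₂_X, map_add, map_mul, map_pow, map_ofNat,
    pow_zero, pow_one, map_one, eval₂_one]
  ring

lemma single_add_single_eq (a b i j : ℕ) :
    (Finsupp.single (0 : Fin 2) a + Finsupp.single (1 : Fin 2) b =
      Finsupp.single (0 : Fin 2) i + Finsupp.single (1 : Fin 2) j) ↔ (a = i ∧ b = j) := by
  constructor
  · intro h
    constructor
    · have h0 := DFunLike.congr_fun h 0
      simpa using h0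
    · have h1 := DFunLike.congr_fun h 1
      simpa using h1
  · rintro ⟨rfl, rfl⟩; rfl

lemma coeffVec_explicit {K : Type*} [CommRing K] (a b c : K) (i : ℕ) :
    coeffVec 2 (C a * (X 0 ^ 2) + C b * (X 0 * X 1) + C c * (X 1 ^ 2) : MvPolynomial (Fin 2) K) i
      = if i = 2 then a else if i = 1 then b else if i = 0 then c else 0 := by
  have hx0 : (X 0 ^ 2 : MvPolynomial (Fin 2) K) =
      monomial (Finsupp.single (0 : Fin 2) 2 + Finsupp.single (1 : Fin 2) 0) 1 := by
    simp [X_pow_eq_monomial]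
  have hx1 : (X 1 ^ 2 : MvPolynomial (Fin 2) K) =
      monomial (Finsupp.single (0 : Fin 2) 0 + Finsupp.single (1 : Fin 2) 2) 1 := by
    simp [X_pow_eq_monomial]
  have hxy : (X 0 * X 1 : MvPolynomial (Fin 2) K) =
      monomial (Finsupp.single (0 : Fin 2) 1 + Finsupp.single (1 : Fin 2) 1) 1 := by
    rw [X, X, monomial_mul]; simp
  rw [coeffVec, hx0, hx1, hxy]
  simp only [C_mul_monomial, mul_one, coeff_add, coeff_monomial, single_add_single_eq]
  rcases Nat.lt_or_ge i 3 with h | h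
  · interval_cases i <;> simp
  · have h2 : ¬ (2 = i ∧ 0 = 2 - i) := by omega
    have h1 : ¬ (1 = i ∧ 1 = 2 - i) := by omega
    have h0 : ¬ (0 = i ∧ 2 = 2 - i) := by omega
    rw [if_neg h2, if_neg h1, if_neg h0]
    have : ¬ i = 2 := by omega
    have : ¬ i = 1 := by omega
    have : ¬ i = 0 := by omega
    simp [*]

lemma FA_eq {K : Type*} [CommRing K] (f g : ℕ → K) (A : Matrix (Fin 2) (Fin 2) K) (i : ℕ) :
    FA 2 f g A i =
    if i = 2 then A 1 1 * (f 2 * A 0 0 ^ 2 + f 1 * (A 0 0 * A 1 0) + f 0 * A 1 0 ^ 2)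
               - A 0 1 * (g 2 * A 0 0 ^ 2 + g 1 * (A 0 0 * A 1 0) + g 0 * A 1 0 ^ 2)
    else if i = 1 then
      A 1 1 * (2 * f 2 * (A 0 0 * A 0 1) + f 1 * (A 0 0 * A 1 1 + A 0 1 * A 1 0)
          + 2 * f 0 * (A 1 0 * A 1 1))
      - A 0 1 * (2 * g 2 * (A 0 0 * A 0 1) + g 1 * (A 0 0 * A 1 1 + A 0 1 * A 1 0)
          + 2 * g 0 * (A 1 0 * A 1 1))
    else if i = 0 then A 1 1 * (f 2 * A 0 1 ^ 2 + f 1 * (A 0 1 * A 1 1) + f 0 * A 1 1 ^ 2)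
               - A 0 1 * (g 2 * A 0 1 ^ 2 + g 1 * (A 0 1 * A 1 1) + g 0 * A 1 1 ^ 2)
    else 0 := by
  have h : MvPolynomial.C (A 1 1) * substMat A (toForm 2 f) -
      MvPolynomial.C (A 0 1) * substMat A (toForm 2 g) =
      C (A 1 1 * (f 2 * A 0 0 ^ 2 + f 1 * (A 0 0 * A 1 0) + f 0 * A 1 0 ^ 2)
        - A 0 1 * (g 2 * A 0 0 ^ 2 + g 1 * (A 0 0 * A 1 0) + g 0 * A 1 0 ^ 2)) * (X 0 ^ 2)
      + C (A 1 1 * (2 * f 2 * (A 0 0 * A 0 1) + f 1 * (A 0 0 * A 1 1 + A 0 1 * A 1 0)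
          + 2 * f 0 * (A 1 0 * A 1 1))
        - A 0 1 * (2 * g 2 * (A 0 0 * A 0 1) + g 1 * (A 0 0 * A 1 1 + A 0 1 * A 1 0)
          + 2 * g 0 * (A 1 0 * A 1 1))) * (X 0 * X 1)
      + C (A 1 1 * (f 2 * A 0 1 ^ 2 + f 1 * (A 0 1 * A 1 1) + f 0 * A 1 1 ^ 2)
        - A 0 1 * (g 2 * A 0 1 ^ 2 + g 1 * (A 0 1 * A 1 1) + g 0 * A 1 1 ^ 2)) * (X 1 ^ 2) := by
    rw [substMat_toForm, substMat_toForm]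
    simp only [map_sub, map_add, map_mul, map_pow, map_ofNat]
    ring
  rw [FA, h, coeffVec_explicit]

lemma GA_eq {K : Type*} [CommRing K] (f g : ℕ → K) (A : Matrix (Fin 2) (Fin 2) K) (i : ℕ) :
    GA 2 f g A i =
    if i = 2 then -A 1 0 * (f 2 * A 0 0 ^ 2 + f 1 * (A 0 0 * A 1 0) + f 0 * A 1 0 ^ 2)
               + A 0 0 * (g 2 * A 0 0 ^ 2 + g 1 * (A 0 0 * A 1 0) + g 0 * A 1 0 ^ 2)
    else if i = 1 then
      -A 1 0 * (2 * f 2 * (A 0 0 * A 0 1) + f 1 * (A 0 0 * A 1 1 + A 0 1 * A 1 0)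
          + 2 * f 0 * (A 1 0 * A 1 1))
      + A 0 0 * (2 * g 2 * (A 0 0 * A 0 1) + g 1 * (A 0 0 * A 1 1 + A 0 1 * A 1 0)
          + 2 * g 0 * (A 1 0 * A 1 1))
    else if i = 0 then -A 1 0 * (f 2 * A 0 1 ^ 2 + f 1 * (A 0 1 * A 1 1) + f 0 * A 1 1 ^ 2)
               + A 0 0 * (g 2 * A 0 1 ^ 2 + g 1 * (A 0 1 * A 1 1) + g 0 * A 1 1 ^ 2)
    else 0 := by
  have h : -(MvPolynomial.C (A 1 0)) * substMat A (toForm 2 f) +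
      MvPolynomial.C (A 0 0) * substMat A (toForm 2 g) =
      C (-A 1 0 * (f 2 * A 0 0 ^ 2 + f 1 * (A 0 0 * A 1 0) + f 0 * A 1 0 ^ 2)
        + A 0 0 * (g 2 * A 0 0 ^ 2 + g 1 * (A 0 0 * A 1 0) + g 0 * A 1 0 ^ 2)) * (X 0 ^ 2)
      + C (-A 1 0 * (2 * f 2 * (A 0 0 * A 0 1) + f 1 * (A 0 0 * A 1 1 + A 0 1 * A 1 0)
          + 2 * f 0 * (A 1 0 * A 1 1))
        + A 0 0 * (2 * g 2 * (A 0 0 * A 0 1) + g 1 * (A 0 0 * A 1 1 + A 0 1 * A 1 0)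
          + 2 * g 0 * (A 1 0 * A 1 1))) * (X 0 * X 1)
      + C (-A 1 0 * (f 2 * A 0 1 ^ 2 + f 1 * (A 0 1 * A 1 1) + f 0 * A 1 1 ^ 2)
        + A 0 0 * (g 2 * A 0 1 ^ 2 + g 1 * (A 0 1 * A 1 1) + g 0 * A 1 1 ^ 2)) * (X 1 ^ 2) := by
    rw [substMat_toForm, substMat_toForm]
    simp only [map_neg, map_sub, map_add, map_mul, map_pow, map_ofNat]
    ring
  rw [GA, h, coeffVec_explicit]

lemma sylRes_two {K : Type*} [CommRing K] (p q : ℕ → K) :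
    sylRes 2 2 p q = (p 2 * q 0 - p 0 * q 2) ^ 2
      - (p 2 * q 1 - p 1 * q 2) * (p 1 * q 0 - p 0 * q 1) := by
  rw [sylRes]
  rw [show ((2 : ℕ) + 2) = 4 from rfl]
  have h : (Matrix.of fun i j : Fin 4 =>
      if (i : ℕ) < 2 then
        (if (i : ℕ) ≤ (j : ℕ) ∧ (j : ℕ) ≤ (i : ℕ) + 2 then p (2 - ((j : ℕ) - (i : ℕ))) else 0)
      else
        (if (i : ℕ) - 2 ≤ (j : ℕ) ∧ (j : ℕ) ≤ ((i : ℕ) - 2) + 2 then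
          q (2 - ((j : ℕ) - ((i : ℕ) - 2))) else (0 : K))) =
      !![p 2, p 1, p 0, 0; 0, p 2, p 1, p 0; q 2, q 1, q 0, 0; 0, q 2, q 1, q 0] := by
    ext i j
    fin_cases i <;> fin_cases j <;> rfl
  rw [h]
  rw [Matrix.det_succ_row_zero]
  simp [Fin.sum_univ_succ, Matrix.det_fin_three, Fin.succAbove]
  ring

end AuxPoly


def mF2 (l α β γ δ : ℚ) : ℚ :=
  l * (δ * (86*α^2 + -1068*(α*γ) + -338*γ^2) - β * (1*α^2 + 7*(α*γ) + -338*γ^2))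
def mF1 (l α β γ δ : ℚ) : ℚ :=
  l * (δ * (2*86*(α*β) + -1068*(α*δ + β*γ) + 2*(-338)*(γ*δ))
     - β * (2*1*(α*β) + 7*(α*δ + β*γ) + 2*(-338)*(γ*δ)))
def mF0 (l α β γ δ : ℚ) : ℚ :=
  l * (δ * (86*β^2 + -1068*(β*δ) + -338*δ^2) - β * (1*β^2 + 7*(β*δ) + -338*δ^2))
def mG2 (l α β γ δ : ℚ) : ℚ :=
  l * (-γ * (86*α^2 + -1068*(α*γ) + -338*γ^2) + α * (1*α^2 + 7*(α*γ) + -338*γ^2))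
def mG1 (l α β γ δ : ℚ) : ℚ :=
  l * (-γ * (2*86*(α*β) + -1068*(α*δ + β*γ) + 2*(-338)*(γ*δ))
     + α * (2*1*(α*β) + 7*(α*δ + β*γ) + 2*(-338)*(γ*δ)))
def mG0 (l α β γ δ : ℚ) : ℚ :=
  l * (-γ * (86*β^2 + -1068*(β*δ) + -338*δ^2) + α * (1*β^2 + 7*(β*δ) + -338*δ^2))

-- composition identities: transform by N = [[d', x],[-c', y]]
section comp
variable (l α β γ δ c' d' x y : ℚ)

lemma comp2F :
    y * (mF2 l α β γ δ * d'^2 - mF1 l α β γ δ * (d'*c') + mF0 l α β γ δ * c'^2)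
  - x * (mG2 l α β γ δ * d'^2 - mG1 l α β γ δ * (d'*c') + mG0 l α β γ δ * c'^2)
  = mF2 l (α*d' - β*c') (α*x + β*y) (γ*d' - δ*c') (γ*x + δ*y) := by
  simp only [mF2, mF1, mF0, mG2, mG1, mG0]; ring

lemma comp1F :
    y * (2 * (mF2 l α β γ δ) * (d'*x) + mF1 l α β γ δ * (d'*y - x*c') - 2 * (mF0 l α β γ δ) * (c'*y))
  - x * (2 * (mG2 l α β γ δ) * (d'*x) + mG1 l α β γ δ * (d'*y - x*c') - 2 * (mG0 l α β γ δ) * (c'*y))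
  = mF1 l (α*d' - β*c') (α*x + β*y) (γ*d' - δ*c') (γ*x + δ*y) := by
  simp only [mF2, mF1, mF0, mG2, mG1, mG0]; ring

lemma comp0F :
    y * (mF2 l α β γ δ * x^2 + mF1 l α β γ δ * (x*y) + mF0 l α β γ δ * y^2)
  - x * (mG2 l α β γ δ * x^2 + mG1 l α β γ δ * (x*y) + mG0 l α β γ δ * y^2)
  = mF0 l (α*d' - β*c') (α*x + β*y) (γ*d' - δ*c') (γ*x + δ*y) := by
  simp only [mF2, mF1, mF0, mG2, mG1, mG0]; ring

lemma comp2G :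
    c' * (mF2 l α β γ δ * d'^2 - mF1 l α β γ δ * (d'*c') + mF0 l α β γ δ * c'^2)
  + d' * (mG2 l α β γ δ * d'^2 - mG1 l α β γ δ * (d'*c') + mG0 l α β γ δ * c'^2)
  = mG2 l (α*d' - β*c') (α*x + β*y) (γ*d' - δ*c') (γ*x + δ*y) := by
  simp only [mF2, mF1, mF0, mG2, mG1, mG0]; ring

lemma comp1G :
    c' * (2 * (mF2 l α β γ δ) * (d'*x) + mF1 l α β γ δ * (d'*y - x*c') - 2 * (mF0 l α β γ δ) * (c'*y))
  + d' * (2 * (mG2 l α β γ δ) * (d'*x) + mG1 l α β γ δ * (d'*y - x*c') - 2 * (mG0 l α β γ δ) * (c'*y))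
  = mG1 l (α*d' - β*c') (α*x + β*y) (γ*d' - δ*c') (γ*x + δ*y) := by
  simp only [mF2, mF1, mF0, mG2, mG1, mG0]; ring

lemma comp0G :
    c' * (mF2 l α β γ δ * x^2 + mF1 l α β γ δ * (x*y) + mF0 l α β γ δ * y^2)
  + d' * (mG2 l α β γ δ * x^2 + mG1 l α β γ δ * (x*y) + mG0 l α β γ δ * y^2)
  = mG0 l (α*d' - β*c') (α*x + β*y) (γ*d' - δ*c') (γ*x + δ*y) := by
  simp only [mF2, mF1, mF0, mG2, mG1, mG0]; ring

end comp

section tri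
variable (l a b d : ℚ)
lemma triF2 : mF2 l a b 0 d = l * (a^2 * (86*d - b)) := by simp only [mF2]; ring
lemma triF1 : mF1 l a b 0 d = l * (a * (-2*b^2 + 165*(b*d) - 1068*d^2)) := by
  simp only [mF1]; ring
lemma triF0 : mF0 l a b 0 d = l * (-b^3 + 79*(b^2*d) - 730*(b*d^2) - 338*d^3) := by
  simp only [mF0]; ring
lemma triG2 : mG2 l a b 0 d = l * a^3 := by simp only [mG2]; ring
lemma triG1 : mG1 l a b 0 d = l * (a^2 * (2*b + 7*d)) := by simp only [mG1]; ring
lemma triG0 : mG0 l a b 0 d = l * (a * (b^2 + 7*(b*d) - 338*d^2)) := by simp only [mG0]; ring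
end tri

lemma rat_num_eq (q : ℚ) : (q.num : ℚ) = q * (q.den : ℚ) := by
  have hden : (q.den : ℚ) ≠ 0 := Nat.cast_ne_zero.2 q.den_nz
  exact (div_eq_iff hden).1 (Rat.num_div_den q)

lemma normalizeModel (l α β γ δ : ℚ) (hl : l ≠ 0) (hΔ : α*δ - β*γ ≠ 0)
    (c2 c1 c0 d2 d1 d0 : ℤ)
    (hc2 : (c2:ℚ) = mF2 l α β γ δ) (hc1 : (c1:ℚ) = mF1 l α β γ δ)
    (hc0 : (c0:ℚ) = mF0 l α β γ δ)
    (hd2 : (d2:ℚ) = mG2 l α β γ δ) (hd1 : (d1:ℚ) = mG1 l α β γ δ)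
    (hd0 : (d0:ℚ) = mG0 l α β γ δ) :
    ∃ (l' t b : ℚ) (I1 I2 I3 I4 I5 I6 : ℤ), l' ≠ 0 ∧ t ≠ 0 ∧
      l'^2 * t^3 = l^2 * (α*δ - β*γ)^3 ∧
      (I1:ℚ) = l' * (t^2 * (86 - b)) ∧
      (I2:ℚ) = l' * (t * (-2*b^2 + 165*b - 1068)) ∧
      (I3:ℚ) = l' * (-b^3 + 79*b^2 - 730*b - 338) ∧
      (I4:ℚ) = l' * t^3 ∧
      (I5:ℚ) = l' * (t^2 * (2*b + 7)) ∧
      (I6:ℚ) = l' * (t * (b^2 + 7*b - 338)) := by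
  -- set up integer data
  set c : ℤ := γ.num * (δ.den : ℤ) with hc
  set d : ℤ := δ.num * (γ.den : ℤ) with hd
  set e : ℤ := (γ.den : ℤ) * (δ.den : ℤ) with he
  have hene : (e:ℚ) ≠ 0 := by
    rw [he]; push_cast
    exact mul_ne_zero (Nat.cast_ne_zero.2 γ.den_nz) (Nat.cast_ne_zero.2 δ.den_nz)
  have hcq : (c:ℚ) = γ * e := by
    push_cast [hc, he]
    rw [rat_num_eq γ]; ring
  have hdq : (d:ℚ) = δ * e := by
    push_cast [hd, he]
    rw [rat_num_eq δ]; ring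
  have hcd0 : ¬ (c = 0 ∧ d = 0) := by
    rintro ⟨h1, h2⟩
    have hγ : γ = 0 := by
      have := hcq; rw [h1] at this; push_cast at this
      rcases mul_eq_zero.1 this.symm with h | h
      · exact h
      · exact absurd h hene
    have hδ : δ = 0 := by
      have := hdq; rw [h2] at this; push_cast at this
      rcases mul_eq_zero.1 this.symm with h | h
      · exact h
      · exact absurd h hene
    apply hΔ; rw [hγ, hδ]; ring
  set h : ℤ := (Int.gcd c d : ℤ) with hh
  have hhne : h ≠ 0 := by
    simp only [hh]
    rw [Int.natCast_ne_zero]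
    rw [Ne, Int.gcd_eq_zero_iff]
    exact hcd0
  set c' : ℤ := c / h with hc'
  set d' : ℤ := d / h with hd'
  have hcc' : c = h * c' := by
    rw [hc', Int.mul_ediv_cancel' ]
    exact Int.gcd_dvd_left c d
  have hdd' : d = h * d' := by
    rw [hd', Int.mul_ediv_cancel']
    exact Int.gcd_dvd_right c d
  set x : ℤ := Int.gcdA c d with hx
  set y : ℤ := Int.gcdB c d with hy
  have hbez : h = c * x + d * y := Int.gcd_eq_gcd_ab c d
  have hE : c' * x + d' * y = 1 := by
    have : h * (c' * x + d' * y) = h * 1 := by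
      rw [mul_one]
      nth_rewrite 2 [hbez]
      rw [hcc', hdd']; ring
    exact mul_left_cancel₀ hhne this
  have hEQ : (c':ℚ) * (x:ℚ) + (d':ℚ) * (y:ℚ) = 1 := by exact_mod_cast congrArg (Int.cast : ℤ → ℚ) hE
  have hγ' : γ * (d':ℚ) - δ * (c':ℚ) = 0 := by
    have h1 : (γ * (d':ℚ) - δ * (c':ℚ)) * e = 0 := by
      have : (c:ℚ) * (d':ℚ) - (d:ℚ) * (c':ℚ) = 0 := by
        have hc2' : (c:ℚ) = (h:ℚ) * (c':ℚ) := by exact_mod_cast congrArg (Int.cast : ℤ → ℚ) hcc'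
        have hd2' : (d:ℚ) = (h:ℚ) * (d':ℚ) := by exact_mod_cast congrArg (Int.cast : ℤ → ℚ) hdd'
        rw [hc2', hd2']; ring
      calc (γ * (d':ℚ) - δ * (c':ℚ)) * e = (c:ℚ) * (d':ℚ) - (d:ℚ) * (c':ℚ) := by
            rw [hcq, hdq]; ring
        _ = 0 := this
    rcases mul_eq_zero.1 h1 with h' | h'
    · exact h'
    · exact absurd h' hene
  set δ' : ℚ := γ * (x:ℚ) + δ * (y:ℚ) with hδ'
  set α' : ℚ := α * (d':ℚ) - β * (c':ℚ) with hα'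
  set β' : ℚ := α * (x:ℚ) + β * (y:ℚ) with hβ'
  have hαδ : α' * δ' = α*δ - β*γ := by
    rw [hα', hδ']
    linear_combination (α*δ - β*γ) * hEQ + (α * (x:ℚ) + β * (y:ℚ)) * hγ'
  have hδ'ne : δ' ≠ 0 := by
    intro h0
    apply hΔ; rw [← hαδ, h0, mul_zero]
  have hα'ne : α' ≠ 0 := by
    intro h0
    apply hΔ; rw [← hαδ, h0, zero_mul]
  refine ⟨l * δ'^3, α'/δ', β'/δ',
    y * (c2*d'^2 - c1*(d'*c') + c0*c'^2) - x * (d2*d'^2 - d1*(d'*c') + d0*c'^2),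
    y * (2*c2*(d'*x) + c1*(d'*y - x*c') - 2*c0*(c'*y))
      - x * (2*d2*(d'*x) + d1*(d'*y - x*c') - 2*d0*(c'*y)),
    y * (c2*x^2 + c1*(x*y) + c0*y^2) - x * (d2*x^2 + d1*(x*y) + d0*y^2),
    c' * (c2*d'^2 - c1*(d'*c') + c0*c'^2) + d' * (d2*d'^2 - d1*(d'*c') + d0*c'^2),
    c' * (2*c2*(d'*x) + c1*(d'*y - x*c') - 2*c0*(c'*y))
      + d' * (2*d2*(d'*x) + d1*(d'*y - x*c') - 2*d0*(c'*y)),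
    c' * (c2*x^2 + c1*(x*y) + c0*y^2) + d' * (d2*x^2 + d1*(x*y) + d0*y^2),
    mul_ne_zero hl (pow_ne_zero 3 hδ'ne), div_ne_zero hα'ne hδ'ne, ?_, ?_, ?_, ?_, ?_, ?_, ?_⟩
  · have h1 : (l*δ'^3)^2 * (α'/δ')^3 = l^2 * (α'*δ')^3 := by
      field_simp
    rw [h1, hαδ]
  · push_cast
    rw [hc2, hc1, hc0, hd2, hd1, hd0]
    rw [comp2F l α β γ δ (c':ℚ) (d':ℚ) (x:ℚ) (y:ℚ), hγ']
    rw [show α * (d':ℚ) - β * (c':ℚ) = α' from rfl, show α * (x:ℚ) + β * (y:ℚ) = β' from rfl,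
      show γ * (x:ℚ) + δ * (y:ℚ) = δ' from rfl, triF2]
    field_simp
  · push_cast
    rw [hc2, hc1, hc0, hd2, hd1, hd0]
    rw [comp1F l α β γ δ (c':ℚ) (d':ℚ) (x:ℚ) (y:ℚ), hγ']
    rw [show α * (d':ℚ) - β * (c':ℚ) = α' from rfl, show α * (x:ℚ) + β * (y:ℚ) = β' from rfl,
      show γ * (x:ℚ) + δ * (y:ℚ) = δ' from rfl, triF1]
    field_simp
  · push_cast
    rw [hc2, hc1, hc0, hd2, hd1, hd0]
    rw [comp0F l α β γ δ (c':ℚ) (d':ℚ) (x:ℚ) (y:ℚ), hγ']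
    rw [show α * (d':ℚ) - β * (c':ℚ) = α' from rfl, show α * (x:ℚ) + β * (y:ℚ) = β' from rfl,
      show γ * (x:ℚ) + δ * (y:ℚ) = δ' from rfl, triF0]
    field_simp
  · push_cast
    rw [hc2, hc1, hc0, hd2, hd1, hd0]
    rw [comp2G l α β γ δ (c':ℚ) (d':ℚ) (x:ℚ) (y:ℚ), hγ']
    rw [show α * (d':ℚ) - β * (c':ℚ) = α' from rfl, show α * (x:ℚ) + β * (y:ℚ) = β' from rfl,
      show γ * (x:ℚ) + δ * (y:ℚ) = δ' from rfl, triG2]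
    field_simp
  · push_cast
    rw [hc2, hc1, hc0, hd2, hd1, hd0]
    rw [comp1G l α β γ δ (c':ℚ) (d':ℚ) (x:ℚ) (y:ℚ), hγ']
    rw [show α * (d':ℚ) - β * (c':ℚ) = α' from rfl, show α * (x:ℚ) + β * (y:ℚ) = β' from rfl,
      show γ * (x:ℚ) + δ * (y:ℚ) = δ' from rfl, triG1]
    field_simp
  · push_cast
    rw [hc2, hc1, hc0, hd2, hd1, hd0]
    rw [comp0G l α β γ δ (c':ℚ) (d':ℚ) (x:ℚ) (y:ℚ), hγ']
    rw [show α * (d':ℚ) - β * (c':ℚ) = α' from rfl, show α * (x:ℚ) + β * (y:ℚ) = β' from rfl,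
      show γ * (x:ℚ) + δ * (y:ℚ) = δ' from rfl, triG0]
    field_simp



-- nonzero lemmas
lemma Qne (m n : ℤ) (hg : Int.gcd m n = 1) : m^2 + 7*m*n - 338*n^2 ≠ 0 := by
  intro h
  have key : ∀ M N : ZMod 17, M^2 + 7*M*N - 338*N^2 = 0 → M = 0 ∧ N = 0 := by decide
  have hc : ((m : ZMod 17))^2 + 7*(m : ZMod 17)*(n : ZMod 17) - 338*(n : ZMod 17)^2 = 0 := by
    have := congrArg (Int.cast : ℤ → ZMod 17) h
    push_cast at this
    convert this using 2 <;> norm_num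
  obtain ⟨hm, hn⟩ := key _ _ hc
  have hm' : (17:ℤ) ∣ m := (ZMod.intCast_zmod_eq_zero_iff_dvd m 17).1 hm
  have hn' : (17:ℤ) ∣ n := (ZMod.intCast_zmod_eq_zero_iff_dvd n 17).1 hn
  have : (17:ℤ) ∣ (Int.gcd m n : ℤ) := Int.dvd_coe_gcd hm' hn'
  rw [hg] at this
  norm_num at this

lemma Vne (m n : ℤ) (hg : Int.gcd m n = 1) : -2*m^2 + 165*m*n - 1068*n^2 ≠ 0 := by
  intro h
  have key : ∀ M N : ZMod 23, -2*M^2 + 165*M*N - 1068*N^2 = 0 → M = 0 ∧ N = 0 := by decide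
  have hc : -2*((m : ZMod 23))^2 + 165*(m : ZMod 23)*(n : ZMod 23) - 1068*(n : ZMod 23)^2 = 0 := by
    have := congrArg (Int.cast : ℤ → ZMod 23) h
    push_cast at this
    convert this using 2
  obtain ⟨hm, hn⟩ := key _ _ hc
  have hm' : (23:ℤ) ∣ m := (ZMod.intCast_zmod_eq_zero_iff_dvd m 23).1 hm
  have hn' : (23:ℤ) ∣ n := (ZMod.intCast_zmod_eq_zero_iff_dvd n 23).1 hn
  have : (23:ℤ) ∣ (Int.gcd m n : ℤ) := Int.dvd_coe_gcd hm' hn'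
  rw [hg] at this
  norm_num at this

lemma Nne (m n : ℤ) (hg : Int.gcd m n = 1) : -m^3 + 79*m^2*n - 730*m*n^2 - 338*n^3 ≠ 0 := by
  intro h
  have key : ∀ M N : ZMod 29, -M^3 + 79*M^2*N - 730*M*N^2 - 338*N^3 = 0 → M = 0 ∧ N = 0 := by
    decide
  have hc : -((m : ZMod 29))^3 + 79*(m : ZMod 29)^2*(n : ZMod 29)
      - 730*(m : ZMod 29)*(n : ZMod 29)^2 - 338*(n : ZMod 29)^3 = 0 := by
    have := congrArg (Int.cast : ℤ → ZMod 29) h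
    push_cast at this
    convert this using 2
  obtain ⟨hm, hn⟩ := key _ _ hc
  have hm' : (29:ℤ) ∣ m := (ZMod.intCast_zmod_eq_zero_iff_dvd m 29).1 hm
  have hn' : (29:ℤ) ∣ n := (ZMod.intCast_zmod_eq_zero_iff_dvd n 29).1 hn
  have : (29:ℤ) ∣ (Int.gcd m n : ℤ) := Int.dvd_coe_gcd hm' hn'
  rw [hg] at this
  norm_num at this

lemma val_int_nonneg (p : ℕ) (I : ℤ) : 0 ≤ padicValRat p (I:ℚ) := by
  rw [padicValRat.of_int]
  exact Int.natCast_nonneg _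

lemma val_ge (p : ℕ) [Fact p.Prime] {l X : ℚ} {I : ℤ} (hl : l ≠ 0) (hX : X ≠ 0)
    (hI : (I:ℚ) = l * X) : 0 ≤ padicValRat p l + padicValRat p X := by
  have h0 : 0 ≤ padicValRat p (I:ℚ) := val_int_nonneg p I
  rwa [hI, padicValRat.mul hl hX] at h0

lemma prelude (p : ℕ) [hp : Fact p.Prime] (l t b : ℚ) (I2 I3 I4 I6 : ℤ)
    (hl : l ≠ 0) (ht : t ≠ 0)
    (h2 : (I2:ℚ) = l * (t * (-2*b^2 + 165*b - 1068)))
    (h3 : (I3:ℚ) = l * (-b^3 + 79*b^2 - 730*b - 338))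
    (h4 : (I4:ℚ) = l * t^3)
    (h6 : (I6:ℚ) = l * (t * (b^2 + 7*b - 338)))
    (hneg : 2 * padicValRat p l + 3 * padicValRat p t ≤ -1) :
    ∃ m n : ℤ, 0 < n ∧ Int.gcd m n = 1 ∧ ¬ (p:ℤ) ∣ n ∧
      (∀ k : ℕ, (k:ℤ) ≤ -(padicValRat p l + padicValRat p t) →
        (p:ℤ)^k ∣ (m^2 + 7*m*n - 338*n^2) ∧ (p:ℤ)^k ∣ (-2*m^2 + 165*m*n - 1068*n^2)) ∧
      (∀ k : ℕ, (k:ℤ) ≤ -(padicValRat p l) →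
        (p:ℤ)^k ∣ (-m^3 + 79*m^2*n - 730*m*n^2 - 338*n^3)) ∧
      0 ≤ padicValRat p l + 3 * padicValRat p t := by
  set a := padicValRat p l with ha
  set e := padicValRat p t with he
  -- from I4
  have h43 : 0 ≤ a + 3 * e := by
    have := val_ge p hl (pow_ne_zero 3 ht) h4
    rwa [padicValRat.pow t] at this
  have hae : a + e ≤ -1 := by omega
  set m : ℤ := b.num with hm
  set n : ℤ := (b.den : ℤ) with hn
  have hn0 : (0:ℤ) < n := by rw [hn]; exact_mod_cast b.pos
  have hnne : n ≠ 0 := ne_of_gt hn0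
  have hnQ : (n:ℚ) ≠ 0 := Int.cast_ne_zero.2 hnne
  have hg : Int.gcd m n = 1 := by
    have := b.reduced
    simpa [Int.gcd, hm, hn] using this
  have hb : b = (m:ℚ) / (n:ℚ) := by
    rw [hm, hn]; push_cast; exact (Rat.num_div_den b).symm
  set Q : ℤ := m^2 + 7*m*n - 338*n^2 with hQdef
  set V : ℤ := -2*m^2 + 165*m*n - 1068*n^2 with hVdef
  set N : ℤ := -m^3 + 79*m^2*n - 730*m*n^2 - 338*n^3 with hNdef
  have hQne : Q ≠ 0 := Qne m n hg
  have hVne : V ≠ 0 := Vne m n hg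
  have hNne : N ≠ 0 := Nne m n hg
  have hQQ : b^2 + 7*b - 338 = (Q:ℚ) / (n:ℚ)^2 := by
    rw [hb, hQdef]; push_cast; field_simp
  have hVV : -2*b^2 + 165*b - 1068 = (V:ℚ) / (n:ℚ)^2 := by
    rw [hb, hVdef]; push_cast; field_simp
  have hNN : -b^3 + 79*b^2 - 730*b - 338 = (N:ℚ) / (n:ℚ)^3 := by
    rw [hb, hNdef]; push_cast; field_simp
  have hQQne : (Q:ℚ) ≠ 0 := Int.cast_ne_zero.2 hQne
  have hVVne : (V:ℚ) ≠ 0 := Int.cast_ne_zero.2 hVne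
  have hNNne : (N:ℚ) ≠ 0 := Int.cast_ne_zero.2 hNne
  -- p does not divide n
  have hpn : ¬ (p:ℤ) ∣ n := by
    intro hdvd
    have hpm : ¬ (p:ℤ) ∣ m := by
      intro hdm
      have : (p:ℤ) ∣ (Int.gcd m n : ℤ) := Int.dvd_coe_gcd hdm hdvd
      rw [hg] at this
      have := Int.le_of_dvd one_pos this
      have hp2 : 2 ≤ (p:ℤ) := by exact_mod_cast hp.out.two_le
      omega
    have hpQ : ¬ (p:ℤ) ∣ Q := by
      intro hdQ
      have h1 : (p:ℤ) ∣ m^2 := by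
        have : m^2 = Q - n * (7*m - 338*n) := by rw [hQdef]; ring
        rw [this]
        exact dvd_sub hdQ (Dvd.dvd.mul_right hdvd _)
      exact hpm ((Nat.prime_iff_prime_int.1 hp.out).dvd_of_dvd_pow h1)
    -- valuation of I6 forces a + e ≥ 2
    have hvd : 0 ≤ a + (e + ((padicValInt p Q : ℤ) - 2 * (padicValRat p (n:ℚ)))) := by
      have hX : t * ((Q:ℚ)/(n:ℚ)^2) ≠ 0 := mul_ne_zero ht (div_ne_zero hQQne (pow_ne_zero 2 hnQ))
      have := val_ge p hl hX (by rw [h6, hQQ])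
      rwa [padicValRat.mul ht (div_ne_zero hQQne (pow_ne_zero 2 hnQ)),
        padicValRat.div hQQne (pow_ne_zero 2 hnQ), padicValRat.pow (n:ℚ),
        padicValRat.of_int] at this
    have hQ0 : padicValInt p Q = 0 := padicValInt.eq_zero_of_not_dvd hpQ
    have hvn : 1 ≤ padicValRat p (n:ℚ) := by
      rw [padicValRat.of_int]
      have hpn' : p ∣ n.natAbs := Int.natCast_dvd.1 hdvd
      have h2 : 1 ≤ padicValNat p n.natAbs :=
        one_le_padicValNat_of_dvd (Int.natAbs_ne_zero.2 hnne) hpn'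
      rw [padicValInt]
      exact_mod_cast h2
    rw [hQ0] at hvd
    omega
  have hvn0 : padicValRat p (n:ℚ) = 0 := by
    rw [padicValRat.of_int, padicValInt.eq_zero_of_not_dvd hpn]
    rfl
  refine ⟨m, n, hn0, hg, hpn, ?_, ?_, h43⟩
  · intro k hk
    constructor
    · have hvd : 0 ≤ a + (e + ((padicValInt p Q : ℤ) - 2 * (padicValRat p (n:ℚ)))) := by
        have hX : t * ((Q:ℚ)/(n:ℚ)^2) ≠ 0 := mul_ne_zero ht (div_ne_zero hQQne (pow_ne_zero 2 hnQ))
        have := val_ge p hl hX (by rw [h6, hQQ])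
        rwa [padicValRat.mul ht (div_ne_zero hQQne (pow_ne_zero 2 hnQ)),
          padicValRat.div hQQne (pow_ne_zero 2 hnQ), padicValRat.pow (n:ℚ),
          padicValRat.of_int] at this
      rw [hvn0] at hvd
      rw [padicValInt_dvd_iff]
      right
      have : (k:ℤ) ≤ (padicValInt p Q : ℤ) := by omega
      exact_mod_cast this
    · have hvd : 0 ≤ a + (e + ((padicValInt p V : ℤ) - 2 * (padicValRat p (n:ℚ)))) := by
        have hX : t * ((V:ℚ)/(n:ℚ)^2) ≠ 0 := mul_ne_zero ht (div_ne_zero hVVne (pow_ne_zero 2 hnQ))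
        have := val_ge p hl hX (by rw [h2, hVV])
        rwa [padicValRat.mul ht (div_ne_zero hVVne (pow_ne_zero 2 hnQ)),
          padicValRat.div hVVne (pow_ne_zero 2 hnQ), padicValRat.pow (n:ℚ),
          padicValRat.of_int] at this
      rw [hvn0] at hvd
      rw [padicValInt_dvd_iff]
      right
      have : (k:ℤ) ≤ (padicValInt p V : ℤ) := by omega
      exact_mod_cast this
  · intro k hk
    have hvd : 0 ≤ a + ((padicValInt p N : ℤ) - 3 * (padicValRat p (n:ℚ))) := by
      have hX : (N:ℚ)/(n:ℚ)^3 ≠ 0 := div_ne_zero hNNne (pow_ne_zero 3 hnQ)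
      have := val_ge p hl hX (by rw [h3, hNN])
      rwa [padicValRat.div hNNne (pow_ne_zero 3 hnQ), padicValRat.pow (n:ℚ),
        padicValRat.of_int] at this
    rw [hvn0] at hvd
    rw [padicValInt_dvd_iff]
    right
    have : (k:ℤ) ≤ (padicValInt p N : ℤ) := by omega
    exact_mod_cast this

lemma zmod_zero_of_dvd {k : ℕ} {a : ℤ} (h : (k:ℤ) ∣ a) : (a : ZMod k) = 0 :=
  (ZMod.intCast_zmod_eq_zero_iff_dvd a k).2 h

lemma zmod_ne_zero_of_not_dvd {k : ℕ} {a : ℤ} (h : ¬ (k:ℤ) ∣ a) : (a : ZMod k) ≠ 0 :=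
  fun h0 => h ((ZMod.intCast_zmod_eq_zero_iff_dvd a k).1 h0)

lemma dec13 : ∀ M N : ZMod 13, N ≠ 0 → M^2 + 7*M*N - 338*N^2 = 0 →
    -2*M^2 + 165*M*N - 1068*N^2 = 0 → False := by decide

lemma dec7 : ∀ M N : ZMod 7, N ≠ 0 → M^2 + 7*M*N - 338*N^2 = 0 →
    -2*M^2 + 165*M*N - 1068*N^2 = 0 → False := by decide

lemma case13 (l t b : ℚ) (I2 I3 I4 I6 : ℤ)
    (hl : l ≠ 0) (ht : t ≠ 0)
    (h2 : (I2:ℚ) = l * (t * (-2*b^2 + 165*b - 1068)))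
    (h3 : (I3:ℚ) = l * (-b^3 + 79*b^2 - 730*b - 338))
    (h4 : (I4:ℚ) = l * t^3)
    (h6 : (I6:ℚ) = l * (t * (b^2 + 7*b - 338)))
    (hneg : 2 * padicValRat 13 l + 3 * padicValRat 13 t ≤ -1) : False := by
  haveI : Fact (Nat.Prime 13) := ⟨by norm_num⟩
  obtain ⟨m, n, hn0, hg, hpn, hQV, hN, h43⟩ :=
    prelude 13 l t b I2 I3 I4 I6 hl ht h2 h3 h4 h6 hneg
  obtain ⟨hQ, hV⟩ := hQV 1 (by omega)
  rw [pow_one] at hQ hV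
  apply dec13 (m : ZMod 13) (n : ZMod 13) (zmod_ne_zero_of_not_dvd hpn)
  · have := zmod_zero_of_dvd (k := 13) hQ
    push_cast at this
    convert this using 2
  · have := zmod_zero_of_dvd (k := 13) hV
    push_cast at this
    convert this using 2

lemma case7 (l t b : ℚ) (I2 I3 I4 I6 : ℤ)
    (hl : l ≠ 0) (ht : t ≠ 0)
    (h2 : (I2:ℚ) = l * (t * (-2*b^2 + 165*b - 1068)))
    (h3 : (I3:ℚ) = l * (-b^3 + 79*b^2 - 730*b - 338))
    (h4 : (I4:ℚ) = l * t^3)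
    (h6 : (I6:ℚ) = l * (t * (b^2 + 7*b - 338)))
    (hneg : 2 * padicValRat 7 l + 3 * padicValRat 7 t ≤ -1) : False := by
  haveI : Fact (Nat.Prime 7) := ⟨by norm_num⟩
  obtain ⟨m, n, hn0, hg, hpn, hQV, hN, h43⟩ :=
    prelude 7 l t b I2 I3 I4 I6 hl ht h2 h3 h4 h6 hneg
  obtain ⟨hQ, hV⟩ := hQV 1 (by omega)
  rw [pow_one] at hQ hV
  apply dec7 (m : ZMod 7) (n : ZMod 7) (zmod_ne_zero_of_not_dvd hpn)
  · have := zmod_zero_of_dvd (k := 7) hQ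
    push_cast at this
    convert this using 2
  · have := zmod_zero_of_dvd (k := 7) hV
    push_cast at this
    convert this using 2

lemma dec5 : ∀ M N : ZMod 5, N ≠ 0 → M^2 + 7*M*N - 338*N^2 = 0 →
    -2*M^2 + 165*M*N - 1068*N^2 = 0 → M - N = 0 := by decide

lemma case5 (l t b : ℚ) (I2 I3 I4 I6 : ℤ)
    (hl : l ≠ 0) (ht : t ≠ 0)
    (h2 : (I2:ℚ) = l * (t * (-2*b^2 + 165*b - 1068)))
    (h3 : (I3:ℚ) = l * (-b^3 + 79*b^2 - 730*b - 338))
    (h4 : (I4:ℚ) = l * t^3)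
    (h6 : (I6:ℚ) = l * (t * (b^2 + 7*b - 338)))
    (hneg : 2 * padicValRat 5 l + 3 * padicValRat 5 t ≤ -1) : False := by
  haveI : Fact (Nat.Prime 5) := ⟨by norm_num⟩
  obtain ⟨m, n, hn0, hg, hpn, hQV, hN, h43⟩ :=
    prelude 5 l t b I2 I3 I4 I6 hl ht h2 h3 h4 h6 hneg
  obtain ⟨hQ, hV⟩ := hQV 1 (by omega)
  rw [pow_one] at hQ hV
  have hN25 := hN 2 (by omega)
  have hmn : (5:ℤ) ∣ (m - n) := by
    have h5 : ((m : ZMod 5)) - (n : ZMod 5) = 0 := by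
      apply dec5 (m : ZMod 5) (n : ZMod 5) (zmod_ne_zero_of_not_dvd hpn)
      · have := zmod_zero_of_dvd (k := 5) hQ
        push_cast at this
        convert this using 2
      · have := zmod_zero_of_dvd (k := 5) hV
        push_cast at this
        convert this using 2
    apply (ZMod.intCast_zmod_eq_zero_iff_dvd (m - n) 5).1
    push_cast
    exact h5
  obtain ⟨w, hw⟩ := hmn
  have hm : m = n + 5*w := by omega
  subst hm
  have hexp : -(n + 5*w)^3 + 79*(n + 5*w)^2*n - 730*(n + 5*w)*n^2 - 338*n^3
      = -990*n^3 + 25*(-115*(w*n^2) + 76*(n*w^2) - 5*w^3) := by ring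
  rw [hexp] at hN25
  obtain ⟨k, hk⟩ := hN25
  have h990 : 990*n^3 = 25*((-115*(w*n^2) + 76*(n*w^2) - 5*w^3) - k) := by
    norm_num at hk ⊢
    linarith
  have h198 : 198*n^3 = 5*((-115*(w*n^2) + 76*(n*w^2) - 5*w^3) - k) := by linarith
  have hdvd : (5:ℤ) ∣ 198*n^3 := ⟨_, h198⟩
  have hp5 : Prime (5:ℤ) := by norm_num
  rcases hp5.dvd_mul.1 hdvd with h | h
  · norm_num at h
  · exact hpn (hp5.dvd_of_dvd_pow h)

lemma dec2 : ∀ M N : ZMod 2, N ≠ 0 → -2*M^2 + 165*M*N - 1068*N^2 = 0 → M = 0 := by decide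

lemma dec4 : ∀ M N : ZMod 4, (N = 1 ∨ N = 3) → M^2 + 7*M*N - 338*N^2 = 0 →
    -2*M^2 + 165*M*N - 1068*N^2 = 0 → False := by decide

lemma odd_zmod4 (n : ℤ) (h : ¬(2:ℤ) ∣ n) : (n : ZMod 4) = 1 ∨ (n : ZMod 4) = 3 := by
  obtain ⟨q, r, hqr, hr⟩ : ∃ q r : ℤ, n = 4*q + r ∧ (r = 1 ∨ r = 3) :=
    ⟨n / 4, n % 4, by omega, by omega⟩
  subst hqr
  have h40 : ((4:ℤ) : ZMod 4) = 0 := by decide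
  rcases hr with rfl | rfl
  · left
    push_cast
    simp [show (4 : ZMod 4) = 0 from by decide]
  · right
    push_cast
    simp [show (4 : ZMod 4) = 0 from by decide]

lemma case2 (l t b : ℚ) (I2 I3 I4 I6 : ℤ)
    (hl : l ≠ 0) (ht : t ≠ 0)
    (h2 : (I2:ℚ) = l * (t * (-2*b^2 + 165*b - 1068)))
    (h3 : (I3:ℚ) = l * (-b^3 + 79*b^2 - 730*b - 338))
    (h4 : (I4:ℚ) = l * t^3)
    (h6 : (I6:ℚ) = l * (t * (b^2 + 7*b - 338)))
    (hneg : 2 * padicValRat 2 l + 3 * padicValRat 2 t ≤ -1)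
    (hlow : -2 ≤ 2 * padicValRat 2 l + 3 * padicValRat 2 t) : False := by
  obtain ⟨m, n, hn0, hg, hpn, hQV, hN, h43⟩ :=
    prelude 2 l t b I2 I3 I4 I6 hl ht h2 h3 h4 h6 hneg
  have hpn' : ¬ (2:ℤ) ∣ n := by exact_mod_cast hpn
  rcases (by omega : 2 * padicValRat 2 l + 3 * padicValRat 2 t = -1 ∨
      2 * padicValRat 2 l + 3 * padicValRat 2 t = -2) with hcase | hcase
  · -- k = 1 case: use 2 ∣ V and 4 ∣ N
    obtain ⟨-, hV⟩ := hQV 1 (by omega)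
    rw [pow_one] at hV
    have hN4 := hN 2 (by omega)
    have hm2 : (2:ℤ) ∣ m := by
      have h0 : ((m : ZMod 2)) = 0 := by
        apply dec2 (m : ZMod 2) (n : ZMod 2) (zmod_ne_zero_of_not_dvd hpn)
        have := zmod_zero_of_dvd (k := 2) hV
        push_cast at this
        convert this using 2
      exact (ZMod.intCast_zmod_eq_zero_iff_dvd m 2).1 h0
    obtain ⟨w, hw⟩ := hm2
    subst hw
    have hexp : -(2*w)^3 + 79*(2*w)^2*n - 730*(2*w)*n^2 - 338*n^3
        = -338*n^3 + 4*(-2*w^3 + 79*(w^2*n) - 365*(w*n^2)) := by ring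
    rw [hexp] at hN4
    obtain ⟨k, hk⟩ := hN4
    have h338 : 338*n^3 = 4*((-2*w^3 + 79*(w^2*n) - 365*(w*n^2)) - k) := by
      norm_num at hk ⊢
      linarith
    have h169 : 169*n^3 = 2*((-2*w^3 + 79*(w^2*n) - 365*(w*n^2)) - k) := by linarith
    have hdvd : (2:ℤ) ∣ 169*n^3 := ⟨_, h169⟩
    have hp2 : Prime (2:ℤ) := by norm_num
    rcases hp2.dvd_mul.1 hdvd with h | h
    · norm_num at h
    · exact hpn' (hp2.dvd_of_dvd_pow h)
  · -- k = 2 case: use 4 ∣ Q and 4 ∣ V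
    obtain ⟨hQ, hV⟩ := hQV 2 (by omega)
    apply dec4 (m : ZMod 4) (n : ZMod 4) (odd_zmod4 n hpn')
    · have := zmod_zero_of_dvd (k := 4) (by exact_mod_cast hQ : (4:ℤ) ∣ _)
      push_cast at this
      convert this using 2
    · have := zmod_zero_of_dvd (k := 4) (by exact_mod_cast hV : (4:ℤ) ∣ _)
      push_cast at this
      convert this using 2

lemma val_s (p : ℕ) [hp : Fact p.Prime] (ρ : ℕ) (c : ℤ) (hc : ¬(p:ℤ) ∣ c)
    (hR : ((p:ℤ)^ρ * c : ℤ) = 218618400)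
    (l' t : ℚ) (hl' : l' ≠ 0) (ht : t ≠ 0) (s : ℤ)
    (hμ : (s:ℚ) = (l'^2*t^3)^2 * 218618400) :
    (padicValInt p s : ℤ) = 2*(2*padicValRat p l' + 3*padicValRat p t) + ρ := by
  have hcne : (c:ℚ) ≠ 0 := by
    intro h0
    have : c = 0 := by exact_mod_cast h0
    rw [this, mul_zero] at hR
    norm_num at hR
  have hpQ : ((p:ℚ)) ≠ 0 := by
    have := hp.out.pos
    positivity
  have hRQ : (218618400:ℚ) = ((p:ℚ))^ρ * (c:ℚ) := by
    have := congrArg (Int.cast : ℤ → ℚ) hR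
    push_cast at this
    linarith
  have hμne : l'^2*t^3 ≠ 0 := mul_ne_zero (pow_ne_zero 2 hl') (pow_ne_zero 3 ht)
  have hRne : (218618400:ℚ) ≠ 0 := by norm_num
  have hv := congrArg (padicValRat p) hμ
  rw [padicValRat.of_int, padicValRat.mul (pow_ne_zero 2 hμne) hRne,
    padicValRat.pow (l'^2*t^3),
    padicValRat.mul (pow_ne_zero 2 hl') (pow_ne_zero 3 ht),
    padicValRat.pow l', padicValRat.pow t, hRQ,
    padicValRat.mul (pow_ne_zero ρ hpQ) hcne,
    padicValRat.pow (p:ℚ), padicValRat.self hp.out.one_lt,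
    padicValRat.of_int, padicValInt.eq_zero_of_not_dvd hc] at hv
  rw [hv]
  push_cast
  ring

lemma pow_dvd_of_val (p : ℕ) [Fact p.Prime] (s : ℤ) (hs : s ≠ 0) (k : ℕ)
    (h : (k:ℤ) ≤ (padicValInt p s : ℤ)) : (p:ℤ)^k ∣ s := by
  rw [padicValInt_dvd_iff]
  right
  exact_mod_cast h

lemma arith_main (l α β γ δ : ℚ) (hl : l ≠ 0) (hΔ : α*δ - β*γ ≠ 0)
    (c2 c1 c0 d2 d1 d0 : ℤ)
    (hc2 : (c2:ℚ) = mF2 l α β γ δ) (hc1 : (c1:ℚ) = mF1 l α β γ δ)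
    (hc0 : (c0:ℚ) = mF0 l α β γ δ)
    (hd2 : (d2:ℚ) = mG2 l α β γ δ) (hd1 : (d1:ℚ) = mG1 l α β γ δ)
    (hd0 : (d0:ℚ) = mG0 l α β γ δ)
    (s : ℤ) (hs : (s:ℚ) = l^4 * (α*δ - β*γ)^6 * 218618400) :
    (218618400:ℤ) ∣ s := by
  obtain ⟨l', t, b, I1, I2, I3, I4, I5, I6, hl', ht', hsc, h1, h2, h3, h4, h5, h6⟩ :=
    normalizeModel l α β γ δ hl hΔ c2 c1 c0 d2 d1 d0 hc2 hc1 hc0 hd2 hd1 hd0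
  have hμ : (s:ℚ) = (l'^2*t^3)^2 * 218618400 := by
    rw [hs, hsc]; ring
  have hsne : s ≠ 0 := by
    intro h0
    rw [h0] at hμ
    have hμne2 : ((l'^2*t^3)^2 * 218618400 : ℚ) ≠ 0 :=
      mul_ne_zero (pow_ne_zero 2 (mul_ne_zero (pow_ne_zero 2 hl') (pow_ne_zero 3 ht')))
        (by norm_num)
    exact hμne2 (by exact_mod_cast hμ.symm)
  haveI i5 : Fact (Nat.Prime 5) := ⟨by norm_num⟩
  haveI i7 : Fact (Nat.Prime 7) := ⟨by norm_num⟩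
  haveI i11 : Fact (Nat.Prime 11) := ⟨by norm_num⟩
  haveI i13 : Fact (Nat.Prime 13) := ⟨by norm_num⟩
  -- p = 2
  have v2 := val_s 2 5 6831825 (by norm_num) (by norm_num) l' t hl' ht' s hμ
  have hval2 : (0:ℤ) ≤ (padicValInt 2 s : ℤ) := Int.natCast_nonneg _
  have hnn2 : 0 ≤ 2*padicValRat 2 l' + 3*padicValRat 2 t := by
    by_contra hcon
    exact case2 l' t b I2 I3 I4 I6 hl' ht' h2 h3 h4 h6 (by omega) (by omega)
  have d2' : (2:ℤ)^5 ∣ s := pow_dvd_of_val 2 s hsne 5 (by omega)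
  -- p = 3
  have v3 := val_s 3 1 72872800 (by norm_num) (by norm_num) l' t hl' ht' s hμ
  have hval3 : (0:ℤ) ≤ (padicValInt 3 s : ℤ) := Int.natCast_nonneg _
  have d3' : (3:ℤ)^1 ∣ s := pow_dvd_of_val 3 s hsne 1 (by omega)
  -- p = 5
  have v5 := val_s 5 2 8744736 (by norm_num) (by norm_num) l' t hl' ht' s hμ
  have hval5 : (0:ℤ) ≤ (padicValInt 5 s : ℤ) := Int.natCast_nonneg _
  have hnn5 : 0 ≤ 2*padicValRat 5 l' + 3*padicValRat 5 t := by
    by_contra hcon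
    exact case5 l' t b I2 I3 I4 I6 hl' ht' h2 h3 h4 h6 (by omega)
  have d5' : (5:ℤ)^2 ∣ s := pow_dvd_of_val 5 s hsne 2 (by omega)
  -- p = 7
  have v7 := val_s 7 2 4461600 (by norm_num) (by norm_num) l' t hl' ht' s hμ
  have hval7 : (0:ℤ) ≤ (padicValInt 7 s : ℤ) := Int.natCast_nonneg _
  have hnn7 : 0 ≤ 2*padicValRat 7 l' + 3*padicValRat 7 t := by
    by_contra hcon
    exact case7 l' t b I2 I3 I4 I6 hl' ht' h2 h3 h4 h6 (by omega)
  have d7' : (7:ℤ)^2 ∣ s := pow_dvd_of_val 7 s hsne 2 (by omega)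
  -- p = 11
  have v11 := val_s 11 1 19874400 (by norm_num) (by norm_num) l' t hl' ht' s hμ
  have hval11 : (0:ℤ) ≤ (padicValInt 11 s : ℤ) := Int.natCast_nonneg _
  have d11' : (11:ℤ)^1 ∣ s := pow_dvd_of_val 11 s hsne 1 (by omega)
  -- p = 13
  have v13 := val_s 13 2 1293600 (by norm_num) (by norm_num) l' t hl' ht' s hμ
  have hval13 : (0:ℤ) ≤ (padicValInt 13 s : ℤ) := Int.natCast_nonneg _
  have hnn13 : 0 ≤ 2*padicValRat 13 l' + 3*padicValRat 13 t := by
    by_contra hcon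
    exact case13 l' t b I2 I3 I4 I6 hl' ht' h2 h3 h4 h6 (by omega)
  have d13' : (13:ℤ)^2 ∣ s := pow_dvd_of_val 13 s hsne 2 (by omega)
  -- combine
  have e1 : ((11:ℤ)^1 * 13^2) ∣ s := by
    apply IsCoprime.mul_dvd ?_ d11' d13'
    rw [Int.isCoprime_iff_gcd_eq_one]; norm_num
  have e2 : ((7:ℤ)^2 * (11^1 * 13^2)) ∣ s := by
    apply IsCoprime.mul_dvd ?_ d7' e1
    rw [Int.isCoprime_iff_gcd_eq_one]; norm_num
  have e3 : ((5:ℤ)^2 * (7^2 * (11^1 * 13^2))) ∣ s := by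
    apply IsCoprime.mul_dvd ?_ d5' e2
    rw [Int.isCoprime_iff_gcd_eq_one]; norm_num
  have e4 : ((3:ℤ)^1 * (5^2 * (7^2 * (11^1 * 13^2)))) ∣ s := by
    apply IsCoprime.mul_dvd ?_ d3' e3
    rw [Int.isCoprime_iff_gcd_eq_one]; norm_num
  have e5 : ((2:ℤ)^5 * (3^1 * (5^2 * (7^2 * (11^1 * 13^2))))) ∣ s := by
    apply IsCoprime.mul_dvd ?_ d2' e4
    rw [Int.isCoprime_iff_gcd_eq_one]; norm_num
  norm_num at e5
  exact e5

section Glue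

def fL : ℕ → ℚ := fun i => if i = 0 then -338 else if i = 1 then -1068 else
      if i = 2 then 86 else 0
def gL : ℕ → ℚ := fun i => if i = 0 then -338 else if i = 1 then 7 else
      if i = 2 then 1 else 0

lemma res_value (l α β γ δ : ℚ) :
    (mF2 l α β γ δ * mG0 l α β γ δ - mF0 l α β γ δ * mG2 l α β γ δ)^2
      - (mF2 l α β γ δ * mG1 l α β γ δ - mF1 l α β γ δ * mG2 l α β γ δ)
        * (mF1 l α β γ δ * mG0 l α β γ δ - mF0 l α β γ δ * mG1 l α β γ δ)
    = l^4 * (α*δ - β*γ)^6 * 218618400 := by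
  simp only [mF2, mF1, mF0, mG2, mG1, mG0]
  ring

variable (l : ℚ) (A : Matrix (Fin 2) (Fin 2) ℚ)

lemma bridgeF2 : l * FA 2 fL gL A 2 = mF2 l (A 0 0) (A 0 1) (A 1 0) (A 1 1) := by
  rw [FA_eq]; norm_num [fL, gL, mF2]
lemma bridgeF1 : l * FA 2 fL gL A 1 = mF1 l (A 0 0) (A 0 1) (A 1 0) (A 1 1) := by
  rw [FA_eq]; norm_num [fL, gL, mF1]
lemma bridgeF0 : l * FA 2 fL gL A 0 = mF0 l (A 0 0) (A 0 1) (A 1 0) (A 1 1) := by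
  rw [FA_eq]; norm_num [fL, gL, mF0]
lemma bridgeG2 : l * GA 2 fL gL A 2 = mG2 l (A 0 0) (A 0 1) (A 1 0) (A 1 1) := by
  rw [GA_eq]; norm_num [fL, gL, mG2]
lemma bridgeG1 : l * GA 2 fL gL A 1 = mG1 l (A 0 0) (A 0 1) (A 1 0) (A 1 1) := by
  rw [GA_eq]; norm_num [fL, gL, mG1]
lemma bridgeG0 : l * GA 2 fL gL A 0 = mG0 l (A 0 0) (A 0 1) (A 1 0) (A 1 1) := by
  rw [GA_eq]; norm_num [fL, gL, mG0]

lemma FA_one (i : ℕ) : FA 2 fL gL (1 : Matrix (Fin 2) (Fin 2) ℚ) i = fL i := by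
  rw [FA_eq]
  rcases i with _ | _ | _ | n <;> simp [fL, gL, Matrix.one_apply]

lemma GA_one (i : ℕ) : GA 2 fL gL (1 : Matrix (Fin 2) (Fin 2) ℚ) i = gL i := by
  rw [GA_eq]
  rcases i with _ | _ | _ | n <;> simp [fL, gL, Matrix.one_apply]

lemma r_mem : (218618400 : ℤ) ∈ ResIdeal ℤ 2 fL gL := by
  apply Ideal.subset_span
  refine ⟨1, 1, one_ne_zero, by simp, ?_, ?_, ?_⟩
  · intro i
    refine ⟨if i = 0 then -338 else if i = 1 then -1068 else if i = 2 then 86 else 0, ?_⟩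
    rw [eq_intCast, one_mul, FA_one]
    simp only [fL]
    split_ifs <;> norm_num
  · intro i
    refine ⟨if i = 0 then -338 else if i = 1 then 7 else if i = 2 then 1 else 0, ?_⟩
    rw [eq_intCast, one_mul, GA_one]
    simp only [gL]
    split_ifs <;> norm_num
  · rw [eq_intCast, sylRes_two]
    simp only [one_mul, FA_one, GA_one]
    norm_num [fL, gL]

lemma r_val : ((218618400 : ℤ) : ℚ) = sylRes 2 2 fL gL := by
  rw [sylRes_two]
  norm_num [fL, gL]

lemma ideal_le : ResIdeal ℤ 2 fL gL ≤ Ideal.span {(218618400 : ℤ)} := by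
  unfold ResIdeal
  rw [Ideal.span_le]
  rintro r' ⟨l, A, hl, hA, hFc, hGc, hsr⟩
  rw [SetLike.mem_coe, Ideal.mem_span_singleton]
  have hΔ : A 0 0 * A 1 1 - A 0 1 * A 1 0 ≠ 0 := by rwa [Matrix.det_fin_two] at hA
  obtain ⟨a2, ha2⟩ := hFc 2
  obtain ⟨a1, ha1⟩ := hFc 1
  obtain ⟨a0, ha0⟩ := hFc 0
  obtain ⟨b2, hb2⟩ := hGc 2
  obtain ⟨b1, hb1⟩ := hGc 1
  obtain ⟨b0, hb0⟩ := hGc 0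
  rw [eq_intCast] at ha2 ha1 ha0 hb2 hb1 hb0 hsr
  have hc2 : (a2:ℚ) = mF2 l (A 0 0) (A 0 1) (A 1 0) (A 1 1) := ha2.trans (bridgeF2 l A)
  have hc1 : (a1:ℚ) = mF1 l (A 0 0) (A 0 1) (A 1 0) (A 1 1) := ha1.trans (bridgeF1 l A)
  have hc0 : (a0:ℚ) = mF0 l (A 0 0) (A 0 1) (A 1 0) (A 1 1) := ha0.trans (bridgeF0 l A)
  have he2 : (b2:ℚ) = mG2 l (A 0 0) (A 0 1) (A 1 0) (A 1 1) := hb2.trans (bridgeG2 l A)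
  have he1 : (b1:ℚ) = mG1 l (A 0 0) (A 0 1) (A 1 0) (A 1 1) := hb1.trans (bridgeG1 l A)
  have he0 : (b0:ℚ) = mG0 l (A 0 0) (A 0 1) (A 1 0) (A 1 1) := hb0.trans (bridgeG0 l A)
  have hs' : ((r':ℤ):ℚ) = l^4 * (A 0 0 * A 1 1 - A 0 1 * A 1 0)^6 * 218618400 := by
    rw [hsr, sylRes_two]
    rw [bridgeF2 l A, bridgeF1 l A, bridgeF0 l A, bridgeG2 l A, bridgeG1 l A, bridgeG0 l A]
    exact res_value l _ _ _ _
  exact arith_main l (A 0 0) (A 0 1) (A 1 0) (A 1 1) hl hΔ a2 a1 a0 b2 b1 b0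
    hc2 hc1 hc0 he2 he1 he0 r' hs'

end Glue

/-- For `φ(z) = (86z² − 1068z − 338)/(z² + 7z − 338)`, the model
`[86X² − 1068XY − 338Y², X² + 7XY − 338Y²]` is a `ℤ`-minimal model of `[φ]`, and the first
eight points of the forward orbit of `0` under `φ` are `0, 1, 4, 11, 12, 7, 15, −374` (with
nonvanishing denominators along the way); in particular the orbit of `0` contains at least `8`
integers. -/
theorem statement18 (f g : ℕ → ℚ) (φ : ℚ → ℚ)
    (hfdef : f = fun i => if i = 0 then -338 else if i = 1 then -1068 else
      if i = 2 then 86 else 0)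
    (hgdef : g = fun i => if i = 0 then -338 else if i = 1 then 7 else
      if i = 2 then 1 else 0)
    (hφ : φ = fun z => (86 * z ^ 2 - 1068 * z - 338) / (z ^ 2 + 7 * z - 338)) :
    -- the model is ℤ-minimal
    (∃ r : ℤ, (r : ℚ) = sylRes 2 2 f g ∧ ResIdeal ℤ 2 f g = Ideal.span {r}) ∧
    -- the denominator does not vanish along the initial orbit of 0
    (∀ z ∈ ({0, 1, 4, 11, 12, 7, 15} : Set ℚ), z ^ 2 + 7 * z - 338 ≠ 0) ∧
    -- the first eight points of the orbit of 0 are integers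
    φ^[0] 0 = 0 ∧ φ^[1] 0 = 1 ∧ φ^[2] 0 = 4 ∧ φ^[3] 0 = 11 ∧
    φ^[4] 0 = 12 ∧ φ^[5] 0 = 7 ∧ φ^[6] 0 = 15 ∧ φ^[7] 0 = -374 := by
  have hf : f = fL := hfdef
  have hg : g = gL := hgdef
  subst hf
  subst hg
  have s0 : φ (0:ℚ) = 1 := by rw [hφ]; norm_num
  have s1 : φ (1:ℚ) = 4 := by rw [hφ]; norm_num
  have s2 : φ (4:ℚ) = 11 := by rw [hφ]; norm_num
  have s3 : φ (11:ℚ) = 12 := by rw [hφ]; norm_num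
  have s4 : φ (12:ℚ) = 7 := by rw [hφ]; norm_num
  have s5 : φ (7:ℚ) = 15 := by rw [hφ]; norm_num
  have s6 : φ (15:ℚ) = -374 := by rw [hφ]; norm_num
  have i0 : φ^[0] (0:ℚ) = 0 := rfl
  have i1 : φ^[1] (0:ℚ) = 1 := by
    rw [Function.iterate_one]; exact s0
  have i2 : φ^[2] (0:ℚ) = 4 := by
    rw [show (2:ℕ) = 1 + 1 from rfl, Function.iterate_succ_apply', i1]; exact s1
  have i3 : φ^[3] (0:ℚ) = 11 := by
    rw [show (3:ℕ) = 2 + 1 from rfl, Function.iterate_succ_apply', i2]; exact s2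
  have i4 : φ^[4] (0:ℚ) = 12 := by
    rw [show (4:ℕ) = 3 + 1 from rfl, Function.iterate_succ_apply', i3]; exact s3
  have i5 : φ^[5] (0:ℚ) = 7 := by
    rw [show (5:ℕ) = 4 + 1 from rfl, Function.iterate_succ_apply', i4]; exact s4
  have i6 : φ^[6] (0:ℚ) = 15 := by
    rw [show (6:ℕ) = 5 + 1 from rfl, Function.iterate_succ_apply', i5]; exact s5
  have i7 : φ^[7] (0:ℚ) = -374 := by
    rw [show (7:ℕ) = 6 + 1 from rfl, Function.iterate_succ_apply', i6]; exact s6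
  refine ⟨⟨218618400, r_val, le_antisymm ideal_le ?_⟩, ?_, i0, i1, i2, i3, i4, i5, i6, i7⟩
  · rw [Ideal.span_le, Set.singleton_subset_iff]
    exact r_mem
  · rintro z (rfl | rfl | rfl | rfl | rfl | rfl | rfl) <;> norm_num

end
end
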